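/- arXiv:1808.07673 — 7 statements merged into one kernel-verified Lean document; each statement's English description precedes it below -/
import Mathlib

section
/- Let I ⊂ ℝ be a bounded measurable set, let k : ℝ → ℝ be bounded and measurable, let Φ, ψ : ℝ → ℝ be Lipschitz continuous, and fix x ∈ ℝ. Then the function g : ℝ → ℝ defined by g(t) = (1/π) ∫_I sin((Φ(x') + t·ψ(x')) − (Φ(x) + t·ψ(x))) · k(x'−x) / (x'−x) dx' is differentiable at t = 0 with derivative g'(0) = (1/π) ∫_I cos(Φ(x') − Φ(x)) · k(x'−x) · (ψ(x') − ψ(x)) / (x'−x) dx'. -/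
open MeasureTheory Real Filter Set

/-- One-dimensional core of the Fréchet derivative of the roof wavefront sensor operator:
differentiability at `t = 0` of the sensor response along the direction `ψ`. -/
theorem stmt_0 (I : Set ℝ) (hIbd : Bornology.IsBounded I) (hIm : MeasurableSet I)
    (k : ℝ → ℝ) (hkm : Measurable k) (M : ℝ) (hkM : ∀ u, |k u| ≤ M)
    (Φ ψ : ℝ → ℝ) (LΦ Lψ : NNReal) (hΦ : LipschitzWith LΦ Φ) (hψ : LipschitzWith Lψ ψ)
    (x : ℝ) :
    HasDerivAt
      (fun t : ℝ => (1 / Real.pi) * ∫ x' in I,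
        Real.sin ((Φ x' + t * ψ x') - (Φ x + t * ψ x)) * k (x' - x) / (x' - x))
      ((1 / Real.pi) * ∫ x' in I,
        Real.cos (Φ x' - Φ x) * k (x' - x) * (ψ x' - ψ x) / (x' - x))
      0 := by
  have hM0 : 0 ≤ M := (abs_nonneg _).trans (hkM 0)
  have hΦm : Measurable Φ := hΦ.continuous.measurable
  have hψm : Measurable ψ := hψ.continuous.measurable
  -- finite measure on I
  obtain ⟨r, hr⟩ := hIbd.subset_closedBall 0
  have hIfin : volume I < ⊤ :=
    lt_of_le_of_lt (measure_mono hr) (isCompact_closedBall 0 r).measure_lt_top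
  have hfm : IsFiniteMeasure (volume.restrict I) := by
    constructor
    rwa [Measure.restrict_apply_univ]
  set μ := volume.restrict I with hμ
  set F : ℝ → ℝ → ℝ := fun t x' =>
    Real.sin ((Φ x' + t * ψ x') - (Φ x + t * ψ x)) * k (x' - x) / (x' - x) with hFdef
  set F' : ℝ → ℝ → ℝ := fun t x' =>
    Real.cos ((Φ x' - Φ x) + t * (ψ x' - ψ x)) * k (x' - x) * ((ψ x' - ψ x) / (x' - x))
    with hF'def
  -- quotient bounds
  have hqψ : ∀ a : ℝ, |(ψ a - ψ x) / (a - x)| ≤ (Lψ : ℝ) := by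
    intro a
    rcases eq_or_ne a x with h | h
    · simp [h]
    · rw [abs_div, div_le_iff₀ (abs_pos.mpr (sub_ne_zero.mpr h))]
      simpa [Real.dist_eq] using hψ.dist_le_mul a x
  have hqΦ : ∀ a : ℝ, |Real.sin (Φ a - Φ x) / (a - x)| ≤ (LΦ : ℝ) := by
    intro a
    rcases eq_or_ne a x with h | h
    · simp [h]
    · rw [abs_div, div_le_iff₀ (abs_pos.mpr (sub_ne_zero.mpr h))]
      calc |Real.sin (Φ a - Φ x)| ≤ |Φ a - Φ x| := Real.abs_sin_le_abs
        _ ≤ (LΦ : ℝ) * |a - x| := by simpa [Real.dist_eq] using hΦ.dist_le_mul a x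
  -- measurability
  have hFmeas : ∀ t : ℝ, AEStronglyMeasurable (F t) μ := by
    intro t
    apply Measurable.aestronglyMeasurable
    exact ((Real.measurable_sin.comp (((hΦm.add (hψm.const_mul t)).sub measurable_const))).mul
      (hkm.comp (measurable_id.sub measurable_const))).div
      (measurable_id.sub measurable_const)
  have hF'meas : AEStronglyMeasurable (F' 0) μ := by
    apply Measurable.aestronglyMeasurable
    exact ((Real.measurable_cos.comp ((((hΦm.sub measurable_const)).add
      (((hψm.sub measurable_const)).const_mul 0)))).mul
      (hkm.comp (measurable_id.sub measurable_const))).mul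
      ((hψm.sub measurable_const).div (measurable_id.sub measurable_const))
  -- integrability of F 0
  have hFint : Integrable (F 0) μ := by
    refine (integrable_const ((LΦ : ℝ) * M)).mono' (hFmeas 0) ?_
    refine Eventually.of_forall fun a => ?_
    have : F 0 a = (Real.sin (Φ a - Φ x) / (a - x)) * k (a - x) := by
      simp only [hFdef]; ring_nf
    rw [Real.norm_eq_abs, this, abs_mul]
    exact mul_le_mul (hqΦ a) (hkM _) (abs_nonneg _) (NNReal.coe_nonneg _)
  -- uniform bound on F'
  have hbound : ∀ᵐ a ∂μ, ∀ t ∈ Metric.ball (0 : ℝ) 1, ‖F' t a‖ ≤ M * (Lψ : ℝ) := by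
    refine Eventually.of_forall fun a t _ => ?_
    rw [Real.norm_eq_abs, hF'def]
    calc |Real.cos ((Φ a - Φ x) + t * (ψ a - ψ x)) * k (a - x) * ((ψ a - ψ x) / (a - x))|
        = |Real.cos ((Φ a - Φ x) + t * (ψ a - ψ x))| * |k (a - x)| * |(ψ a - ψ x) / (a - x)| := by
          rw [abs_mul, abs_mul]
      _ ≤ 1 * M * (Lψ : ℝ) := by
          exact mul_le_mul (mul_le_mul (Real.abs_cos_le_one _) (hkM _) (abs_nonneg _)
            zero_le_one) (hqψ a) (abs_nonneg _) (by linarith)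
      _ = M * (Lψ : ℝ) := by ring
  -- pointwise differentiability
  have hdiff : ∀ᵐ a ∂μ, ∀ t ∈ Metric.ball (0 : ℝ) 1, HasDerivAt (F · a) (F' t a) t := by
    refine Eventually.of_forall fun a t _ => ?_
    have hfun : (F · a) = fun t : ℝ =>
        Real.sin ((Φ a - Φ x) + t * (ψ a - ψ x)) * (k (a - x) / (a - x)) := by
      funext s
      simp only [hFdef]
      rw [mul_div_assoc]
      congr 1
      ring
    rw [hfun]
    have h1 : HasDerivAt (fun s : ℝ => (Φ a - Φ x) + s * (ψ a - ψ x)) (ψ a - ψ x) t := by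
      simpa using ((hasDerivAt_id t).mul_const (ψ a - ψ x)).const_add (Φ a - Φ x)
    have h2 := (h1.sin).mul_const (k (a - x) / (a - x))
    convert h2 using 1
    · rfl
    · rfl
    simp only [hF'def]
    ring
  have key := hasDerivAt_integral_of_dominated_loc_of_deriv_le (μ := μ) (s := Metric.ball 0 1)
    (Metric.ball_mem_nhds 0 one_pos) (Eventually.of_forall hFmeas) hFint hF'meas hbound
    (integrable_const _) hdiff
  have hfe : (fun x' => Real.cos (Φ x' - Φ x) * k (x' - x) * (ψ x' - ψ x) / (x' - x)) = F' 0 := by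
    funext a
    simp only [hF'def, zero_mul, add_zero, mul_div_assoc]
  rw [hfe]
  exact key.2.const_mul (1 / Real.pi)
end

section
/- Let I = [a,b] be a compact interval, let Φ, ψ, φ : ℝ → ℝ be Lipschitz continuous, and let k : ℝ → ℝ be Lipschitz continuous and even (k(−u) = k(u) for all u). Then ∫_I [ (1/π) ∫_I cos(Φ(x') − Φ(x)) · k(x'−x) · (ψ(x') − ψ(x)) / (x'−x) dx' ] · φ(x) dx = − ∫_I ψ(x) · [ lim_{ε→0⁺} (1/π) ∫_{I \ (x−ε,x+ε)} cos(Φ(x') − Φ(x)) · k(x'−x) · (φ(x') + φ(x)) / (x'−x) dx' ] dx, where the inner limit on the right-hand side exists for every x ∈ (a,b). -/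
open MeasureTheory Real Filter Set


private lemma aux_log_bound (t : ℝ) (ht : 0 < t) :
    |Real.log t| ≤ 2 * t ^ (-(1/2) : ℝ) + t := by
  have hr : (0:ℝ) ≤ t ^ (-(1/2) : ℝ) := Real.rpow_nonneg ht.le _
  rcases le_total 1 t with h | h
  · have h0 : 0 ≤ Real.log t := Real.log_nonneg h
    have h1 : Real.log t ≤ t - 1 := Real.log_le_sub_one_of_pos ht
    rw [abs_of_nonneg h0]; nlinarith
  · have h0 : Real.log t ≤ 0 := Real.log_nonpos ht.le h
    rw [abs_of_nonpos h0]
    have hs : 0 < Real.sqrt t := Real.sqrt_pos.mpr ht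
    have h1 : Real.log (Real.sqrt t)⁻¹ ≤ (Real.sqrt t)⁻¹ - 1 :=
      Real.log_le_sub_one_of_pos (by positivity)
    rw [Real.log_inv, Real.log_sqrt ht.le] at h1
    have h3 : t ^ (-(1/2):ℝ) = (Real.sqrt t)⁻¹ := by
      rw [Real.rpow_neg ht.le, Real.sqrt_eq_rpow]
    rw [h3]; nlinarith

private lemma aux_logInt (c : ℝ) : IntegrableOn Real.log (Ioc (0:ℝ) c) := by
  rcases le_or_gt c 0 with h | h
  · rw [Ioc_eq_empty (by intro hlt; exact absurd (hlt.trans_le h) (lt_irrefl 0))]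
    exact integrableOn_empty
  · have h1 : IntervalIntegrable (fun t : ℝ => t ^ (-(1/2):ℝ)) volume 0 c :=
      intervalIntegral.intervalIntegrable_rpow' (by norm_num)
    have h2 : IntegrableOn (fun t : ℝ => 2 * t ^ (-(1/2):ℝ) + t) (Ioc 0 c) := by
      have := (h1.const_mul 2).add (continuous_id.intervalIntegrable 0 c)
      rwa [intervalIntegrable_iff_integrableOn_Ioc_of_le h.le] at this
    refine h2.mono' Real.measurable_log.aestronglyMeasurable ?_
    filter_upwards [ae_restrict_mem measurableSet_Ioc] with t ht
    rw [Real.norm_eq_abs]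
    exact aux_log_bound t ht.1

private lemma aux_logInt_left (a b : ℝ) :
    IntegrableOn (fun x : ℝ => Real.log (x - a)) (Icc a b) := by
  rcases le_or_gt b a with h | h
  · have h0 : volume (Icc a b) = 0 := by
      rw [Real.volume_Icc]; simp [ENNReal.ofReal_eq_zero]; linarith
    unfold IntegrableOn
    rw [Measure.restrict_eq_zero.mpr h0]
    exact integrable_zero_measure
  · have h1 : IntervalIntegrable Real.log volume 0 (b - a) := by
      rw [intervalIntegrable_iff_integrableOn_Ioc_of_le (by linarith)]
      exact aux_logInt _
    have h2 := h1.comp_sub_right a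
    have h3 : IntervalIntegrable (fun x => Real.log (x - a)) volume a b := by
      simpa using h2
    rw [intervalIntegrable_iff_integrableOn_Ioc_of_le h.le] at h3
    exact (integrableOn_Icc_iff_integrableOn_Ioc).mpr h3

private lemma aux_logInt_right (a b : ℝ) :
    IntegrableOn (fun x : ℝ => Real.log (b - x)) (Icc a b) := by
  rcases le_or_gt b a with h | h
  · have h0 : volume (Icc a b) = 0 := by
      rw [Real.volume_Icc]; simp [ENNReal.ofReal_eq_zero]; linarith
    unfold IntegrableOn
    rw [Measure.restrict_eq_zero.mpr h0]
    exact integrable_zero_measure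
  · have h1 : IntervalIntegrable Real.log volume 0 (b - a) := by
      rw [intervalIntegrable_iff_integrableOn_Ioc_of_le (by linarith)]
      exact aux_logInt _
    have h2 := h1.comp_sub_left b
    have h3 : IntervalIntegrable (fun x => Real.log (b - x)) volume a b := by
      have := h2.symm; simpa using this
    rw [intervalIntegrable_iff_integrableOn_Ioc_of_le h.le] at h3
    exact (integrableOn_Icc_iff_integrableOn_Ioc).mpr h3


private lemma aux_inv_int {c d x : ℝ} (hx : x ∉ Icc c d) :
    IntegrableOn (fun t : ℝ => (t - x)⁻¹) (Icc c d) := by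
  refine ContinuousOn.integrableOn_compact isCompact_Icc ?_
  refine (continuousOn_id.sub continuousOn_const).inv₀ fun t ht => sub_ne_zero.mpr ?_
  intro e; exact hx ((show t = x from e) ▸ ht)

open intervalIntegral in
private lemma aux_int_inv {c d x : ℝ} (hcd : c ≤ d) (hx : x ∉ Icc c d) :
    ∫ t in Icc c d, (t - x)⁻¹ = Real.log (d - x) - Real.log (c - x) := by
  have hx' : x < c ∨ d < x := by
    rcases lt_or_ge x c with h | h
    · exact Or.inl h
    · rcases le_or_gt x d with h2 | h2
      · exact absurd (mem_Icc.mpr ⟨h, h2⟩) hx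
      · exact Or.inr h2
  have h0 : (0:ℝ) ∉ Set.uIcc (c - x) (d - x) := by
    rw [Set.uIcc_of_le (by linarith : c - x ≤ d - x), Set.mem_Icc]
    push_neg
    intro h1
    rcases hx' with h | h
    · linarith
    · linarith
  have hc0 : c - x ≠ 0 := by rcases hx' with h | h <;> intro e <;> nlinarith [e]
  have hd0 : d - x ≠ 0 := by rcases hx' with h | h <;> intro e <;> nlinarith [e]
  calc ∫ t in Icc c d, (t - x)⁻¹ = ∫ t in Ioc c d, (t - x)⁻¹ := integral_Icc_eq_integral_Ioc
    _ = ∫ t in c..d, (t - x)⁻¹ := (intervalIntegral.integral_of_le hcd).symm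
    _ = ∫ t in (c-x)..(d-x), t⁻¹ := by
        simpa using integral_comp_sub_right (a := c) (b := d) (fun t => t⁻¹) x
    _ = Real.log ((d-x)/(c-x)) := integral_inv h0
    _ = _ := Real.log_div hd0 hc0

private lemma aux_Dset {a b x ε : ℝ} (hx : x ∈ Icc a b) (hε : 0 < ε) :
    Icc a b \ Ioo (x - ε) (x + ε) = Icc a (x - ε) ∪ Icc (x + ε) b := by
  ext t
  simp only [mem_diff, mem_Icc, mem_Ioo, mem_union, not_and, not_lt]
  obtain ⟨h1, h2⟩ := hx
  constructor
  · rintro ⟨⟨ha, hb⟩, h⟩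
    rcases le_or_gt t (x - ε) with h' | h'
    · exact Or.inl ⟨ha, h'⟩
    · exact Or.inr ⟨h h', hb⟩
  · rintro (⟨ha, hb⟩ | ⟨ha, hb⟩)
    · exact ⟨⟨ha, by linarith⟩, fun h' => by linarith⟩
    · exact ⟨⟨by linarith, hb⟩, fun h' => by linarith⟩

private lemma aux_inv_intD {a b x ε : ℝ} (hx : x ∈ Icc a b) (hε : 0 < ε) :
    IntegrableOn (fun t : ℝ => (t - x)⁻¹) (Icc a b \ Ioo (x - ε) (x + ε)) := by
  rw [aux_Dset hx hε]
  refine (aux_inv_int ?_).union (aux_inv_int ?_)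
  · rw [mem_Icc]; push_neg; intro _; linarith
  · rw [mem_Icc]; push_neg; intro h; linarith

private lemma aux_Leps {a b x : ℝ} (hx : x ∈ Ioo a b) {ε : ℝ} (hε : 0 < ε) :
    ∫ t in Icc a b \ Ioo (x - ε) (x + ε), (t - x)⁻¹ =
      max (Real.log (b - x)) (Real.log ε) - max (Real.log (x - a)) (Real.log ε) := by
  obtain ⟨h1, h2⟩ := hx
  have hleft : ∫ t in Icc a (x - ε), (t - x)⁻¹
      = Real.log ε - max (Real.log (x - a)) (Real.log ε) := by
    rcases le_or_gt a (x - ε) with h | h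
    · rw [aux_int_inv h (by rw [mem_Icc]; push_neg; intro _; linarith)]
      rw [max_eq_left (Real.log_le_log hε (by linarith))]
      rw [show x - ε - x = -ε by ring, show a - x = -(x - a) by ring,
        Real.log_neg_eq_log, Real.log_neg_eq_log]
    · rw [Icc_eq_empty (not_le.mpr h), Measure.restrict_empty, integral_zero_measure]
      rw [max_eq_right (Real.log_le_log (by linarith) (by linarith))]
      ring
  have hright : ∫ t in Icc (x + ε) b, (t - x)⁻¹
      = max (Real.log (b - x)) (Real.log ε) - Real.log ε := by
    rcases le_or_gt (x + ε) b with h | h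
    · rw [aux_int_inv h (by rw [mem_Icc]; push_neg; intro h'; linarith)]
      rw [max_eq_left (Real.log_le_log hε (by linarith))]
      rw [show x + ε - x = ε by ring]
    · rw [Icc_eq_empty (not_le.mpr h), Measure.restrict_empty, integral_zero_measure]
      rw [max_eq_right (Real.log_le_log (by linarith) (by linarith))]
      ring
  rw [aux_Dset (mem_Icc.mpr ⟨h1.le, h2.le⟩) hε,
    setIntegral_union (by
      rw [Set.disjoint_left]
      rintro t ⟨_, ht2⟩ ⟨ht3, _⟩
      linarith) measurableSet_Icc
      (aux_inv_int (by rw [mem_Icc]; push_neg; intro _; linarith))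
      (aux_inv_int (by rw [mem_Icc]; push_neg; intro h'; linarith)),
    hleft, hright]
  ring


private lemma aux_div_bound {n d C : ℝ} (hC : 0 ≤ C) (h : |n| ≤ C * |d|) : |n / d| ≤ C := by
  rcases eq_or_ne d 0 with rfl | hd
  · simpa using hC
  · rw [abs_div, div_le_iff₀ (abs_pos.mpr hd)]; exact h

private lemma aux_num_bound {A K S S0 kz LA LK LS BK BS d : ℝ}
    (hA : |A - 1| ≤ LA * |d|) (hK : |K| ≤ BK) (hKz : |K - kz| ≤ LK * |d|)
    (hS : |S| ≤ BS) (hSS : |S - S0| ≤ LS * |d|) (hkz : |kz| ≤ BK)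
    (hLS : 0 ≤ LS) :
    |A * K * S - kz * S0| ≤ (LA * BK * BS + LK * BS + BK * LS) * |d| := by
  have hBK : 0 ≤ BK := (abs_nonneg K).trans hK
  have hBS : 0 ≤ BS := (abs_nonneg S).trans hS
  have hLA : 0 ≤ LA * |d| := (abs_nonneg _).trans hA
  have hLK : 0 ≤ LK * |d| := (abs_nonneg _).trans hKz
  have e : A * K * S - kz * S0 = (A - 1) * K * S + (K - kz) * S + kz * (S - S0) := by ring
  calc |A * K * S - kz * S0| = |(A - 1) * K * S + (K - kz) * S + kz * (S - S0)| := by rw [e]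
    _ ≤ |(A - 1) * K * S + (K - kz) * S| + |kz * (S - S0)| := abs_add_le _ _
    _ ≤ |(A - 1) * K * S| + |(K - kz) * S| + |kz * (S - S0)| := by
        have := abs_add_le ((A - 1) * K * S) ((K - kz) * S); linarith
    _ = |A - 1| * |K| * |S| + |K - kz| * |S| + |kz| * |S - S0| := by
        rw [abs_mul, abs_mul, abs_mul, abs_mul]
    _ ≤ (LA * |d|) * BK * BS + (LK * |d|) * BS + BK * (LS * |d|) := by
        gcongr <;> positivity
    _ = (LA * BK * BS + LK * BS + BK * LS) * |d| := by ring

private lemma aux_lip_bound {L : NNReal} {f : ℝ → ℝ} (hf : LipschitzWith L f) {a b x : ℝ}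
    (hx : x ∈ Icc a b) : |f x| ≤ |f a| + L * (b - a) := by
  have h := hf.dist_le_mul x a
  rw [Real.dist_eq, Real.dist_eq] at h
  obtain ⟨h1, h2⟩ := hx
  have h3 : |x - a| ≤ b - a := by rw [abs_of_nonneg (by linarith)]; linarith
  have h4 : |f x| - |f a| ≤ |f x - f a| := abs_sub_abs_le_abs_sub _ _
  have h5 : (L:ℝ) * |x - a| ≤ L * (b - a) := by
    exact mul_le_mul_of_nonneg_left h3 L.coe_nonneg
  linarith

private lemma aux_lip_diff {L : NNReal} {f : ℝ → ℝ} (hf : LipschitzWith L f) (x y : ℝ) :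
    |f x - f y| ≤ L * |x - y| := by
  have h := hf.dist_le_mul x y
  rwa [Real.dist_eq, Real.dist_eq] at h


set_option maxHeartbeats 2000000 in
/-- One-dimensional core of the adjoint computation for the roof wavefront sensor:
the L²-pairing of the Fréchet derivative applied to `ψ` against `φ` equals minus the
pairing of `ψ` against the principal-value adjoint applied to `φ`; the inner
principal-value limit exists for every `x ∈ (a,b)`. -/
theorem stmt_3 (a b : ℝ) (hab : a < b) (Φ ψ φ k : ℝ → ℝ)
    (LΦ Lψ Lφ Lk : NNReal)
    (hΦ : LipschitzWith LΦ Φ) (hψ : LipschitzWith Lψ ψ) (hφ : LipschitzWith Lφ φ)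
    (hk : LipschitzWith Lk k) (hke : ∀ u, k (-u) = k u) :
    ∃ pv : ℝ → ℝ,
      (∀ x ∈ Set.Ioo a b, Filter.Tendsto
        (fun ε : ℝ => (1 / Real.pi) * ∫ x' in Set.Icc a b \ Set.Ioo (x - ε) (x + ε),
          Real.cos (Φ x' - Φ x) * k (x' - x) * (φ x' + φ x) / (x' - x))
        (nhdsWithin 0 (Set.Ioi 0)) (nhds (pv x))) ∧
      (∫ x in Set.Icc a b,
          ((1 / Real.pi) * ∫ x' in Set.Icc a b,
            Real.cos (Φ x' - Φ x) * k (x' - x) * (ψ x' - ψ x) / (x' - x)) * φ x)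
        = - ∫ x in Set.Icc a b, ψ x * pv x := by
  have hab' : (0:ℝ) ≤ b - a := by linarith
  -- boundedness constants
  set Bψ : ℝ := |ψ a| + Lψ * (b - a) with hBψdef
  set Bφ : ℝ := |φ a| + Lφ * (b - a) with hBφdef
  set Bk : ℝ := |k 0| + Lk * (b - a) with hBkdef
  have hBψ0 : 0 ≤ Bψ := add_nonneg (abs_nonneg _) (mul_nonneg Lψ.coe_nonneg hab')
  have hBφ0 : 0 ≤ Bφ := add_nonneg (abs_nonneg _) (mul_nonneg Lφ.coe_nonneg hab')
  have hBk0 : 0 ≤ Bk := add_nonneg (abs_nonneg _) (mul_nonneg Lk.coe_nonneg hab')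
  have hbψ : ∀ x ∈ Set.Icc a b, |ψ x| ≤ Bψ := fun x hx => aux_lip_bound hψ hx
  have hbφ : ∀ x ∈ Set.Icc a b, |φ x| ≤ Bφ := fun x hx => aux_lip_bound hφ hx
  have hk0B : |k 0| ≤ Bk :=
    le_add_of_nonneg_right (mul_nonneg Lk.coe_nonneg hab')
  have hbk : ∀ x ∈ Set.Icc a b, ∀ x' ∈ Set.Icc a b, |k (x' - x)| ≤ Bk := by
    intro x hx x' hx'
    have h1 : |k (x' - x) - k 0| ≤ Lk * |x' - x - 0| := aux_lip_diff hk _ _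
    rw [sub_zero] at h1
    have h2 : |x' - x| ≤ b - a :=
      abs_le.mpr ⟨by linarith [hx.1, hx'.2, hx.2, hx'.1], by linarith [hx.1, hx'.2, hx.2, hx'.1]⟩
    have h3 : |k (x' - x)| - |k 0| ≤ |k (x' - x) - k 0| := abs_sub_abs_le_abs_sub _ _
    have h4 : (Lk:ℝ) * |x' - x| ≤ Lk * (b - a) := mul_le_mul_of_nonneg_left h2 Lk.coe_nonneg
    rw [hBkdef]; linarith
  have hcos1 : ∀ y : ℝ, |Real.cos y - 1| ≤ |y| := by
    intro y
    have h := Real.cos_two_mul (y/2)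
    rw [show 2*(y/2) = y by ring] at h
    have h2 := Real.sin_sq_add_cos_sq (y/2)
    have he : Real.cos y - 1 = -(2 * Real.sin (y/2)^2) := by nlinarith
    rw [he, abs_neg, abs_of_nonneg (by positivity)]
    have hs1 : |Real.sin (y/2)| ≤ 1 :=
      abs_le.mpr ⟨Real.neg_one_le_sin _, Real.sin_le_one _⟩
    have hs2 : |Real.sin (y/2)| ≤ |y/2| := Real.abs_sin_le_abs
    have hy : |y/2| = |y|/2 := by rw [abs_div]; norm_num
    nlinarith [abs_nonneg (Real.sin (y/2)), abs_nonneg y, sq_abs (Real.sin (y/2))]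
  have hcosd : ∀ x x' : ℝ, |Real.cos (Φ x' - Φ x) - 1| ≤ LΦ * |x' - x| := by
    intro x x'
    have h2 : |Φ x' - Φ x| ≤ LΦ * |x' - x| := aux_lip_diff hΦ x' x
    exact (hcos1 _).trans h2
  -- numerator bounds
  set C1 : ℝ := Bk * Lψ with hC1def
  set C2 : ℝ := LΦ * Bk * (2*Bφ) + Lk * (2*Bφ) + Bk * Lφ with hC2def
  set C3 : ℝ := LΦ * Bk * (2*(Bψ*Bφ)) + Lk * (2*(Bψ*Bφ)) + Bk * (Lψ*Bφ + Bψ*Lφ) with hC3def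
  have hC10 : 0 ≤ C1 := mul_nonneg hBk0 Lψ.coe_nonneg
  have hC20 : 0 ≤ C2 := by
    have := Lψ.coe_nonneg; have := Lφ.coe_nonneg; have := Lk.coe_nonneg
    have := LΦ.coe_nonneg; positivity
  have hC30 : 0 ≤ C3 := by
    have := Lψ.coe_nonneg; have := Lφ.coe_nonneg; have := Lk.coe_nonneg
    have := LΦ.coe_nonneg; positivity
  have hn1 : ∀ x ∈ Set.Icc a b, ∀ x' ∈ Set.Icc a b,
      |Real.cos (Φ x' - Φ x) * k (x' - x) * (ψ x' - ψ x)| ≤ C1 * |x' - x| := by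
    intro x hx x' hx'
    rw [abs_mul, abs_mul]
    have hc : |Real.cos (Φ x' - Φ x)| ≤ 1 := Real.abs_cos_le_one _
    have hd := aux_lip_diff hψ x' x
    calc |Real.cos (Φ x' - Φ x)| * |k (x' - x)| * |ψ x' - ψ x|
        ≤ 1 * Bk * (Lψ * |x' - x|) :=
          mul_le_mul (mul_le_mul hc (hbk x hx x' hx') (abs_nonneg _) zero_le_one)
            hd (abs_nonneg _) (by rw [one_mul]; exact hBk0)
    _ = C1 * |x' - x| := by rw [hC1def]; ring
  have hn2 : ∀ x ∈ Set.Icc a b, ∀ x' ∈ Set.Icc a b,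
      |Real.cos (Φ x' - Φ x) * k (x' - x) * (φ x' + φ x) - 2 * k 0 * φ x|
        ≤ C2 * |x' - x| := by
    intro x hx x' hx'
    have key := aux_num_bound (A := Real.cos (Φ x' - Φ x)) (K := k (x' - x))
      (S := φ x' + φ x) (S0 := 2 * φ x) (kz := k 0) (LA := LΦ) (LK := Lk) (LS := Lφ)
      (BK := Bk) (BS := 2*Bφ) (d := x' - x)
      (hcosd x x') (hbk x hx x' hx')
      (by have := aux_lip_diff hk (x' - x) 0; rwa [sub_zero] at this)
      (by
        have h1 := hbφ x hx; have h2 := hbφ x' hx'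
        calc |φ x' + φ x| ≤ |φ x'| + |φ x| := abs_add_le _ _
          _ ≤ 2*Bφ := by linarith)
      (by
        rw [show φ x' + φ x - 2 * φ x = φ x' - φ x by ring]
        exact aux_lip_diff hφ x' x)
      hk0B Lφ.coe_nonneg
    rw [show Real.cos (Φ x' - Φ x) * k (x' - x) * (φ x' + φ x) - 2 * k 0 * φ x
      = Real.cos (Φ x' - Φ x) * k (x' - x) * (φ x' + φ x) - k 0 * (2 * φ x) by ring]
    exact key.trans_eq (by rw [hC2def])
  have hS3b : ∀ x ∈ Set.Icc a b, ∀ x' ∈ Set.Icc a b,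
      |ψ x' * φ x + ψ x * φ x'| ≤ 2*(Bψ*Bφ) := by
    intro x hx x' hx'
    calc |ψ x' * φ x + ψ x * φ x'| ≤ |ψ x'| * |φ x| + |ψ x| * |φ x'| := by
          rw [← abs_mul, ← abs_mul]; exact abs_add_le _ _
      _ ≤ Bψ * Bφ + Bψ * Bφ := by
          refine add_le_add ?_ ?_ <;>
            exact mul_le_mul (hbψ _ (by assumption)) (hbφ _ (by assumption))
              (abs_nonneg _) hBψ0
      _ = 2*(Bψ*Bφ) := by ring
  have hn3 : ∀ x ∈ Set.Icc a b, ∀ x' ∈ Set.Icc a b,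
      |Real.cos (Φ x' - Φ x) * k (x' - x) * (ψ x' * φ x + ψ x * φ x')
        - 2 * k 0 * (ψ x * φ x)| ≤ C3 * |x' - x| := by
    intro x hx x' hx'
    have h1 := hbφ x hx; have h2 := hbφ x' hx'
    have h3 := hbψ x hx; have h4 := hbψ x' hx'
    have h5 := aux_lip_diff hψ x' x; have h6 := aux_lip_diff hφ x' x
    have habs : ∀ u v : ℝ, |u * v| = |u| * |v| := fun u v => abs_mul u v
    have key := aux_num_bound (A := Real.cos (Φ x' - Φ x)) (K := k (x' - x))
      (S := ψ x' * φ x + ψ x * φ x') (S0 := 2 * (ψ x * φ x)) (kz := k 0)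
      (LA := LΦ) (LK := Lk) (LS := Lψ*Bφ + Bψ*Lφ) (BK := Bk) (BS := 2*(Bψ*Bφ)) (d := x' - x)
      (hcosd x x') (hbk x hx x' hx')
      (by have := aux_lip_diff hk (x' - x) 0; rwa [sub_zero] at this)
      (hS3b x hx x' hx')
      (by
        rw [show ψ x' * φ x + ψ x * φ x' - 2 * (ψ x * φ x)
          = (ψ x' - ψ x) * φ x + ψ x * (φ x' - φ x) by ring]
        calc |(ψ x' - ψ x) * φ x + ψ x * (φ x' - φ x)|
            ≤ |ψ x' - ψ x| * |φ x| + |ψ x| * |φ x' - φ x| := by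
              rw [← abs_mul, ← abs_mul]; exact abs_add_le _ _
          _ ≤ (Lψ * |x' - x|) * Bφ + Bψ * (Lφ * |x' - x|) := by
              gcongr <;> first | exact abs_nonneg _ | assumption
          _ = (Lψ*Bφ + Bψ*Lφ) * |x' - x| := by ring)
      hk0B (by positivity)
    rw [show Real.cos (Φ x' - Φ x) * k (x' - x) * (ψ x' * φ x + ψ x * φ x')
        - 2 * k 0 * (ψ x * φ x)
      = Real.cos (Φ x' - Φ x) * k (x' - x) * (ψ x' * φ x + ψ x * φ x')
        - k 0 * (2 * (ψ x * φ x)) by ring]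
    exact key.trans_eq (by rw [hC3def])
  -- continuity of components
  have hΦc := hΦ.continuous
  have hψc := hψ.continuous
  have hφc := hφ.continuous
  have hkc := hk.continuous
  -- the adjoint kernel H and the boundary-log function L
  set H : ℝ → ℝ → ℝ := fun x x' =>
    (Real.cos (Φ x' - Φ x) * k (x' - x) * (φ x' + φ x) - 2 * k 0 * φ x) / (x' - x)
    with hHdef
  set L : ℝ → ℝ := fun x => Real.log (b - x) - Real.log (x - a) with hLdef
  set pv : ℝ → ℝ := fun x =>
    (1/Real.pi) * ((∫ x' in Set.Icc a b, H x x') + 2 * φ x * k 0 * L x) with hpvdef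
  have hHb : ∀ x ∈ Set.Icc a b, ∀ x' ∈ Set.Icc a b, |H x x'| ≤ C2 := by
    intro x hx x' hx'
    exact aux_div_bound hC20 (hn2 x hx x' hx')
  have hHm : ∀ x : ℝ, Measurable (H x) := by
    intro x
    apply Measurable.div
    · exact (((Real.continuous_cos.comp ((hΦc.sub continuous_const))).mul
        (hkc.comp (continuous_id.sub continuous_const))).mul
        (hφc.add continuous_const)).sub continuous_const |>.measurable
    · exact measurable_id.sub measurable_const
  have hHint : ∀ x ∈ Set.Icc a b, IntegrableOn (H x) (Set.Icc a b) := by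
    intro x hxi
    refine Integrable.mono' (integrable_const C2) (hHm x).aestronglyMeasurable ?_
    filter_upwards [ae_restrict_mem measurableSet_Icc] with t ht
    rw [Real.norm_eq_abs]
    exact hHb x hxi t ht
  refine ⟨pv, ?_, ?_⟩
  · -- Part 1: existence of the principal-value limit
    intro x hx
    obtain ⟨hxa, hxb⟩ := hx
    have hxI : x ∈ Set.Icc a b := ⟨hxa.le, hxb.le⟩
    have hm0 : 0 < min (x - a) (b - x) := lt_min (by linarith) (by linarith)
    have hDmeas : ∀ ε : ℝ, MeasurableSet (Set.Icc a b \ Set.Ioo (x - ε) (x + ε)) :=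
      fun ε => measurableSet_Icc.diff measurableSet_Ioo
    have tendH : Filter.Tendsto
        (fun ε : ℝ => ∫ x' in Set.Icc a b \ Set.Ioo (x - ε) (x + ε), H x x')
        (nhdsWithin 0 (Set.Ioi 0)) (nhds (∫ x' in Set.Icc a b, H x x')) := by
      have heq : ∀ ε : ℝ, (∫ x' in Set.Icc a b \ Set.Ioo (x - ε) (x + ε), H x x')
          = ∫ x', (Set.Icc a b \ Set.Ioo (x - ε) (x + ε)).indicator (H x) x' ∂(volume.restrict (Set.Icc a b)) := by
        intro ε
        rw [MeasureTheory.integral_indicator (hDmeas ε), Measure.restrict_restrict (hDmeas ε),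
          Set.inter_eq_left.mpr diff_subset]
      simp_rw [heq]
      refine tendsto_integral_filter_of_dominated_convergence (fun _ => C2) ?_ ?_ ?_ ?_
      · exact Filter.Eventually.of_forall fun ε =>
          ((hHm x).indicator (hDmeas ε)).aestronglyMeasurable
      · refine Filter.Eventually.of_forall fun ε => ?_
        filter_upwards [ae_restrict_mem measurableSet_Icc] with t ht
        rw [Real.norm_eq_abs]
        rcases em (t ∈ Set.Icc a b \ Set.Ioo (x - ε) (x + ε)) with h | h
        · rw [Set.indicator_of_mem h]; exact hHb x hxI t ht
        · rw [Set.indicator_of_notMem h, abs_zero]; exact hC20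
      · exact integrable_const C2
      · have hne : ∀ᵐ x' ∂(volume.restrict (Set.Icc a b)), x' ≠ x := by
          refine ae_iff.mpr ?_
          have : {x' : ℝ | ¬x' ≠ x} = {x} := by ext t; simp
          rw [this]
          exact le_antisymm ((Measure.restrict_apply_le _ _).trans_eq
            Real.volume_singleton) zero_le
        filter_upwards [hne, ae_restrict_mem measurableSet_Icc] with t ht htI
        refine tendsto_const_nhds.congr' ?_
        have hδ : 0 < |t - x| := abs_pos.mpr (sub_ne_zero.mpr ht)
        filter_upwards [Ioo_mem_nhdsGT_of_mem ⟨le_refl (0:ℝ), hδ⟩] with ε hε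
        rw [Set.indicator_of_mem]
        exact ⟨htI, fun hc => absurd (abs_lt.mpr ⟨by linarith [hc.1], by linarith [hc.2]⟩)
          (not_lt.mpr hε.2.le)⟩
    have hev : ∀ᶠ ε in nhdsWithin (0:ℝ) (Set.Ioi 0),
        (1/Real.pi) * ((∫ x' in Set.Icc a b \ Set.Ioo (x - ε) (x + ε), H x x')
          + 2 * φ x * k 0 * L x)
        = (1/Real.pi) * ∫ x' in Set.Icc a b \ Set.Ioo (x - ε) (x + ε),
            Real.cos (Φ x' - Φ x) * k (x' - x) * (φ x' + φ x) / (x' - x) := by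
      filter_upwards [Ioo_mem_nhdsGT_of_mem ⟨le_refl (0:ℝ), hm0⟩] with ε hε
      obtain ⟨hε0, hεm⟩ := hε
      have hsplit : Set.EqOn
          (fun x' => Real.cos (Φ x' - Φ x) * k (x' - x) * (φ x' + φ x) / (x' - x))
          (fun x' => H x x' + (2 * φ x * k 0) * (x' - x)⁻¹)
          (Set.Icc a b \ Set.Ioo (x - ε) (x + ε)) := by
        intro t ht
        have htx : t - x ≠ 0 := by
          intro e
          exact ht.2 ⟨by nlinarith [e], by nlinarith [e]⟩
        simp only [hHdef]
        field_simp
        ring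
      rw [setIntegral_congr_fun (hDmeas ε) hsplit,
        integral_add ((hHint x hxI).mono_set diff_subset)
          ((aux_inv_intD hxI hε0).const_mul _),
        integral_const_mul, aux_Leps ⟨hxa, hxb⟩ hε0,
        max_eq_left (Real.log_le_log hε0 (by
          have := min_le_right (x - a) (b - x); linarith)),
        max_eq_left (Real.log_le_log hε0 (by
          have := min_le_left (x - a) (b - x); linarith)),
        hLdef]
    have final := (tendH.add (tendsto_const_nhds :
        Filter.Tendsto (fun _ : ℝ => 2 * φ x * k 0 * L x)
          (nhdsWithin (0:ℝ) (Set.Ioi 0)) (nhds (2 * φ x * k 0 * L x)))).const_mul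
        (1/Real.pi)
    exact Filter.Tendsto.congr' hev final
  · -- Part 2: the adjoint identity
    classical
    set ν : Measure (ℝ×ℝ) :=
      (volume.restrict (Set.Icc a b)).prod (volume.restrict (Set.Icc a b)) with hνdef
    haveI : IsFiniteMeasure ν := by rw [hνdef]; infer_instance
    set Up : ℝ×ℝ → ℝ := fun p =>
      Real.cos (Φ p.2 - Φ p.1) * k (p.2 - p.1) * (ψ p.2 - ψ p.1) / (p.2 - p.1) * φ p.1
      with hUpdef
    set Vp : ℝ×ℝ → ℝ := fun p => ψ p.1 * H p.1 p.2 with hVpdef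
    set Gp : ℝ×ℝ → ℝ := fun p =>
      Real.cos (Φ p.2 - Φ p.1) * k (p.2 - p.1) * (ψ p.2 * φ p.1 + ψ p.1 * φ p.2) / (p.2 - p.1)
      with hGpdef
    set Wp : ℝ×ℝ → ℝ := fun p =>
      (Real.cos (Φ p.2 - Φ p.1) * k (p.2 - p.1) * (ψ p.2 * φ p.1 + ψ p.1 * φ p.2)
        - 2 * k 0 * (ψ p.1 * φ p.1)) / (p.2 - p.1) with hWpdef
    have hcosP : Continuous fun p : ℝ×ℝ => Real.cos (Φ p.2 - Φ p.1) :=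
      Real.continuous_cos.comp ((hΦc.comp continuous_snd).sub (hΦc.comp continuous_fst))
    have hkP : Continuous fun p : ℝ×ℝ => k (p.2 - p.1) :=
      hkc.comp (continuous_snd.sub continuous_fst)
    have hinvP : Measurable fun p : ℝ×ℝ => (p.2 - p.1)⁻¹ :=
      (measurable_snd.sub measurable_fst).inv
    have hUm : Measurable Up := by
      rw [hUpdef]
      exact ((((hcosP.mul hkP).mul ((hψc.comp continuous_snd).sub
        (hψc.comp continuous_fst))).measurable.div
        (measurable_snd.sub measurable_fst)).mul (hφc.comp continuous_fst).measurable)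
    have hVm : Measurable Vp := by
      rw [hVpdef]
      refine (hψc.comp continuous_fst).measurable.mul ?_
      simp only [hHdef]
      exact (((hcosP.mul hkP).mul ((hφc.comp continuous_snd).add
        (hφc.comp continuous_fst))).sub
        (continuous_const.mul (hφc.comp continuous_fst))).measurable.div
        (measurable_snd.sub measurable_fst)
    have hGm : Measurable Gp := by
      rw [hGpdef]
      exact ((hcosP.mul hkP).mul (((hψc.comp continuous_snd).mul
        (hφc.comp continuous_fst)).add ((hψc.comp continuous_fst).mul
        (hφc.comp continuous_snd)))).measurable.div (measurable_snd.sub measurable_fst)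
    have hWm : Measurable Wp := by
      rw [hWpdef]
      exact (((hcosP.mul hkP).mul (((hψc.comp continuous_snd).mul
        (hφc.comp continuous_fst)).add ((hψc.comp continuous_fst).mul
        (hφc.comp continuous_snd)))).sub (continuous_const.mul
        ((hψc.comp continuous_fst).mul (hφc.comp continuous_fst)))).measurable.div
        (measurable_snd.sub measurable_fst)
    have haePair : ∀ᵐ p ∂ν, p.1 ∈ Set.Icc a b ∧ p.2 ∈ Set.Icc a b := by
      rw [hνdef, Measure.prod_restrict]
      filter_upwards [ae_restrict_mem (measurableSet_Icc.prod measurableSet_Icc)] with p hp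
      exact Set.mem_prod.mp hp
    have hsingleton : ∀ y : ℝ, (volume.restrict (Set.Icc a b)) {y} = 0 := fun y =>
      le_antisymm ((Measure.restrict_apply_le _ _).trans_eq Real.volume_singleton) zero_le
    have hdiag : ∀ᵐ p ∂ν, p.1 ≠ p.2 := by
      have hdiagset : MeasurableSet {p : ℝ×ℝ | p.1 = p.2} :=
        measurableSet_eq_fun measurable_fst measurable_snd
      have hdiag0 : ν {p : ℝ×ℝ | p.1 = p.2} = 0 := by
        rw [hνdef, Measure.prod_apply hdiagset]
        have hpre : ∀ y : ℝ, (Prod.mk y ⁻¹' {p : ℝ×ℝ | p.1 = p.2}) = {y} := by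
          intro y; ext t; simp [eq_comm]
        simp only [hpre, hsingleton]
        simp
      refine ae_iff.mpr ?_
      simpa only [ne_eq, not_not] using hdiag0
    have hintpat : ∀ (f : ℝ×ℝ → ℝ) (C : ℝ), Measurable f →
        (∀ᵐ p ∂ν, |f p| ≤ C) → Integrable f ν := by
      intro f C hf hC
      refine Integrable.mono' (integrable_const C) hf.aestronglyMeasurable ?_
      filter_upwards [hC] with p hp
      rwa [Real.norm_eq_abs]
    have hUint : Integrable Up ν := by
      refine hintpat Up (C1 * Bφ) hUm ?_
      filter_upwards [haePair] with p hp
      simp only [hUpdef]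
      rw [abs_mul]
      exact mul_le_mul (aux_div_bound hC10 (hn1 p.1 hp.1 p.2 hp.2)) (hbφ p.1 hp.1)
        (abs_nonneg _) hC10
    have hVint : Integrable Vp ν := by
      refine hintpat Vp (Bψ * C2) hVm ?_
      filter_upwards [haePair] with p hp
      simp only [hVpdef]
      rw [abs_mul]
      exact mul_le_mul (hbψ p.1 hp.1) (hHb p.1 hp.1 p.2 hp.2) (abs_nonneg _) hBψ0
    have hWint : Integrable Wp ν := by
      refine hintpat Wp C3 hWm ?_
      filter_upwards [haePair] with p hp
      simp only [hWpdef]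
      exact aux_div_bound hC30 (hn3 p.1 hp.1 p.2 hp.2)
    have hUVW : ∀ p : ℝ×ℝ, Up p = Wp p - Vp p := by
      intro p
      simp only [hUpdef, hVpdef, hWpdef, hHdef]
      rcases eq_or_ne p.2 p.1 with h | h
      · rw [h]; simp [sub_self, div_zero]
      · have hd : p.2 - p.1 ≠ 0 := sub_ne_zero.mpr h
        field_simp
        ring
    -- truncation sequence
    have he0 : ∀ n : ℕ, 0 < ((n:ℝ)+1)⁻¹ := fun n => by positivity
    have helim : Filter.Tendsto (fun n : ℕ => ((n:ℝ)+1)⁻¹) Filter.atTop (nhds 0) := by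
      simpa only [one_div] using tendsto_one_div_add_atTop_nhds_zero_nat (𝕜 := ℝ)
    set S : ℕ → Set (ℝ×ℝ) := fun n => {p : ℝ×ℝ | ((n:ℝ)+1)⁻¹ ≤ |p.1 - p.2|} with hSdef
    have hSmeas : ∀ n, MeasurableSet (S n) := fun n =>
      measurableSet_le measurable_const (measurable_fst.sub measurable_snd).abs
    have haeIoo : ∀ᵐ x ∂(volume.restrict (Set.Icc a b)), x ∈ Set.Ioo a b := by
      have h2 : volume (Set.Icc a b \ Set.Ioo a b) = 0 := by
        rw [Set.Icc_diff_Ioo_same hab.le]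
        exact (Set.toFinite _).measure_zero _
      refine ae_iff.mpr ?_
      rw [Measure.restrict_apply (show MeasurableSet {x : ℝ | ¬x ∈ Set.Ioo a b} from
        measurableSet_Ioo.compl)]
      refine measure_mono_null (fun t ht => (Set.mem_diff t).mpr ⟨ht.2, ht.1⟩) h2
    have T1 : Filter.Tendsto (fun n => ∫ p in S n, Wp p ∂ν) Filter.atTop
        (nhds (∫ p, Wp p ∂ν)) := by
      have heq : ∀ n, (∫ p in S n, Wp p ∂ν) = ∫ p, (S n).indicator Wp p ∂ν :=
        fun n => (MeasureTheory.integral_indicator (hSmeas n)).symm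
      simp_rw [heq]
      refine tendsto_integral_filter_of_dominated_convergence (fun _ => C3) ?_ ?_ ?_ ?_
      · exact Filter.Eventually.of_forall fun n =>
          (hWm.indicator (hSmeas n)).aestronglyMeasurable
      · refine Filter.Eventually.of_forall fun n => ?_
        filter_upwards [haePair] with p hp
        rw [Real.norm_eq_abs]
        rcases em (p ∈ S n) with h | h
        · rw [Set.indicator_of_mem h]
          simp only [hWpdef]
          exact aux_div_bound hC30 (hn3 p.1 hp.1 p.2 hp.2)
        · rw [Set.indicator_of_notMem h, abs_zero]; exact hC30
      · exact integrable_const C3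
      · filter_upwards [hdiag] with p hp
        have hδ : 0 < |p.1 - p.2| := abs_pos.mpr (sub_ne_zero.mpr hp)
        refine tendsto_const_nhds.congr' ?_
        filter_upwards [helim.eventually (gt_mem_nhds hδ)] with n hn
        exact (Set.indicator_of_mem (show p ∈ S n from hn.le) Wp).symm
    have T2 : ∀ n : ℕ, (∫ p in S n, Wp p ∂ν)
        = -(2 * k 0) * ∫ x in Set.Icc a b, ψ x * φ x *
            (max (Real.log (b - x)) (Real.log (((n:ℝ)+1)⁻¹))
              - max (Real.log (x - a)) (Real.log (((n:ℝ)+1)⁻¹))) := by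
      intro n
      have hmono : ∀ p : ℝ×ℝ, p ∈ S n → ((n:ℝ)+1)⁻¹ ≤ |p.2 - p.1| := by
        intro p hp; rw [abs_sub_comm]; exact hp
      have hker : Set.EqOn Wp
          (fun p => Gp p - (2 * k 0) * (ψ p.1 * φ p.1 * (p.2 - p.1)⁻¹)) (S n) := by
        intro p hp
        have hd : p.2 - p.1 ≠ 0 := by
          intro h0
          have h1 := hmono p hp
          rw [h0, abs_zero] at h1
          linarith [he0 n]
        simp only [hWpdef, hGpdef]
        field_simp
      have hGint : IntegrableOn Gp (S n) ν := by
        refine Integrable.mono' (integrable_const ((Bk * (2*(Bψ*Bφ))) / ((n:ℝ)+1)⁻¹))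
          hGm.aestronglyMeasurable ?_
        filter_upwards [ae_restrict_mem (hSmeas n), ae_restrict_of_ae haePair] with p hp hpI
        rw [Real.norm_eq_abs]
        simp only [hGpdef, abs_div]
        refine div_le_div₀ (by positivity) ?_ (he0 n) (hmono p hp)
        rw [abs_mul, abs_mul]
        calc |Real.cos (Φ p.2 - Φ p.1)| * |k (p.2 - p.1)| * |ψ p.2 * φ p.1 + ψ p.1 * φ p.2|
            ≤ 1 * Bk * (2*(Bψ*Bφ)) :=
              mul_le_mul (mul_le_mul (Real.abs_cos_le_one _) (hbk p.1 hpI.1 p.2 hpI.2)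
                (abs_nonneg _) zero_le_one) (hS3b p.1 hpI.1 p.2 hpI.2) (abs_nonneg _)
                (by rw [one_mul]; exact hBk0)
          _ = Bk * (2*(Bψ*Bφ)) := by ring
      have hhint2 : IntegrableOn (fun p : ℝ×ℝ => ψ p.1 * φ p.1 * (p.2 - p.1)⁻¹) (S n) ν := by
        refine Integrable.mono' (integrable_const ((Bψ*Bφ) / ((n:ℝ)+1)⁻¹))
          (((hψc.comp continuous_fst).mul
            (hφc.comp continuous_fst)).measurable.mul hinvP).aestronglyMeasurable ?_
        filter_upwards [ae_restrict_mem (hSmeas n), ae_restrict_of_ae haePair] with p hp hpI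
        rw [Real.norm_eq_abs, abs_mul, div_eq_mul_inv]
        refine mul_le_mul ?_ ?_ (abs_nonneg _) (by positivity)
        · rw [abs_mul]
          exact mul_le_mul (hbψ p.1 hpI.1) (hbφ p.1 hpI.1) (abs_nonneg _) hBψ0
        · rw [abs_inv]
          exact inv_anti₀ (he0 n) (hmono p hp)
      -- antisymmetry kills the Gp part
      have hGswap : ∀ p : ℝ×ℝ, Gp (Prod.swap p) = - Gp p := by
        intro p
        simp only [hGpdef, Prod.snd_swap, Prod.fst_swap]
        rw [show Φ p.1 - Φ p.2 = -(Φ p.2 - Φ p.1) by ring, Real.cos_neg,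
          show p.1 - p.2 = -(p.2 - p.1) by ring, hke, div_neg, neg_inj]
        ring
      have hswapS : ∀ p : ℝ×ℝ, Prod.swap p ∈ S n ↔ p ∈ S n := by
        intro p
        simp only [hSdef, Set.mem_setOf_eq, Prod.fst_swap, Prod.snd_swap]
        rw [abs_sub_comm]
      have hGzero : ∫ p in S n, Gp p ∂ν = 0 := by
        have hmp : MeasurePreserving (Prod.swap : ℝ×ℝ → ℝ×ℝ) ν ν := by
          rw [hνdef]; exact Measure.measurePreserving_swap
        have h2 : ∫ p, (S n).indicator Gp p ∂ν
            = ∫ p, (S n).indicator Gp (Prod.swap p) ∂ν :=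
          (hmp.integral_comp MeasurableEquiv.prodComm.measurableEmbedding _).symm
        have h3 : ∀ p : ℝ×ℝ, (S n).indicator Gp (Prod.swap p) = - (S n).indicator Gp p := by
          intro p
          rcases em (p ∈ S n) with h | h
          · rw [Set.indicator_of_mem h, Set.indicator_of_mem ((hswapS p).mpr h), hGswap]
          · rw [Set.indicator_of_notMem h, Set.indicator_of_notMem
              (fun hc => h ((hswapS p).mp hc)), neg_zero]
        have h4 : ∫ p, (S n).indicator Gp p ∂ν = - ∫ p, (S n).indicator Gp p ∂ν := by
          calc ∫ p, (S n).indicator Gp p ∂ν = ∫ p, (S n).indicator Gp (Prod.swap p) ∂ν := h2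
            _ = ∫ p, - (S n).indicator Gp p ∂ν := by simp_rw [h3]
            _ = - ∫ p, (S n).indicator Gp p ∂ν := integral_neg _
        rw [← MeasureTheory.integral_indicator (hSmeas n)]
        linarith
      -- Fubini on the remaining part
      have hindint : Integrable ((S n).indicator
          (fun p : ℝ×ℝ => ψ p.1 * φ p.1 * (p.2 - p.1)⁻¹)) ν := by
        rw [integrable_indicator_iff (hSmeas n)]
        exact hhint2
      have hFub : (∫ p in S n, ψ p.1 * φ p.1 * (p.2 - p.1)⁻¹ ∂ν)
          = ∫ x in Set.Icc a b, ψ x * φ x *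
              (max (Real.log (b - x)) (Real.log (((n:ℝ)+1)⁻¹))
                - max (Real.log (x - a)) (Real.log (((n:ℝ)+1)⁻¹))) := by
        rw [← MeasureTheory.integral_indicator (hSmeas n)]
        rw [hνdef] at hindint ⊢
        rw [MeasureTheory.integral_prod _ hindint]
        refine integral_congr_ae ?_
        filter_upwards [haeIoo] with x hxIoo
        have hTmeas : MeasurableSet {y : ℝ | ((n:ℝ)+1)⁻¹ ≤ |x - y|} :=
          measurableSet_le measurable_const (measurable_const.sub measurable_id).abs
        have hyeq : ∀ y : ℝ, (S n).indicator
            (fun p : ℝ×ℝ => ψ p.1 * φ p.1 * (p.2 - p.1)⁻¹) (x, y)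
            = ({y : ℝ | ((n:ℝ)+1)⁻¹ ≤ |x - y|}).indicator
              (fun y => ψ x * φ x * (y - x)⁻¹) y := by
          intro y
          rcases em (((n:ℝ)+1)⁻¹ ≤ |x - y|) with h | h
          · rw [Set.indicator_of_mem (show (x,y) ∈ S n from h),
              Set.indicator_of_mem
                (show y ∈ {y : ℝ | ((n:ℝ)+1)⁻¹ ≤ |x - y|} from h)]
          · rw [Set.indicator_of_notMem (show ¬(x,y) ∈ S n from h),
              Set.indicator_of_notMem
                (show ¬y ∈ {y : ℝ | ((n:ℝ)+1)⁻¹ ≤ |x - y|} from h)]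
        have hseteq : {y : ℝ | ((n:ℝ)+1)⁻¹ ≤ |x - y|} ∩ Set.Icc a b
            = Set.Icc a b \ Set.Ioo (x - ((n:ℝ)+1)⁻¹) (x + ((n:ℝ)+1)⁻¹) := by
          ext y
          simp only [Set.mem_inter_iff, Set.mem_setOf_eq, Set.mem_diff, Set.mem_Icc,
            Set.mem_Ioo]
          constructor
          · rintro ⟨h1, h2⟩
            exact ⟨h2, fun hy => absurd h1 (not_le.mpr
              (abs_lt.mpr ⟨by linarith [hy.2], by linarith [hy.1]⟩))⟩
          · rintro ⟨h1, h2⟩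
            refine ⟨?_, h1⟩
            by_contra hlt
            push_neg at hlt
            obtain ⟨hl, hr⟩ := abs_lt.mp hlt
            exact h2 ⟨by linarith, by linarith⟩
        calc (∫ y, (S n).indicator
              (fun p : ℝ×ℝ => ψ p.1 * φ p.1 * (p.2 - p.1)⁻¹) (x, y)
              ∂(volume.restrict (Set.Icc a b)))
            = ∫ y, ({y : ℝ | ((n:ℝ)+1)⁻¹ ≤ |x - y|}).indicator
                (fun y => ψ x * φ x * (y - x)⁻¹) y ∂(volume.restrict (Set.Icc a b)) :=
              integral_congr_ae (Filter.Eventually.of_forall hyeq)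
          _ = ∫ y in {y : ℝ | ((n:ℝ)+1)⁻¹ ≤ |x - y|},
                ψ x * φ x * (y - x)⁻¹ ∂(volume.restrict (Set.Icc a b)) :=
              MeasureTheory.integral_indicator hTmeas
          _ = ∫ y in Set.Icc a b \ Set.Ioo (x - ((n:ℝ)+1)⁻¹) (x + ((n:ℝ)+1)⁻¹),
                ψ x * φ x * (y - x)⁻¹ := by
              rw [Measure.restrict_restrict hTmeas, hseteq]
          _ = ψ x * φ x * ∫ y in Set.Icc a b \ Set.Ioo (x - ((n:ℝ)+1)⁻¹) (x + ((n:ℝ)+1)⁻¹),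
                (y - x)⁻¹ := by
              rw [← integral_const_mul]
          _ = ψ x * φ x * (max (Real.log (b - x)) (Real.log (((n:ℝ)+1)⁻¹))
                - max (Real.log (x - a)) (Real.log (((n:ℝ)+1)⁻¹))) := by
              rw [aux_Leps hxIoo (he0 n)]
      calc (∫ p in S n, Wp p ∂ν)
          = ∫ p in S n, (Gp p - (2 * k 0) * (ψ p.1 * φ p.1 * (p.2 - p.1)⁻¹)) ∂ν :=
            setIntegral_congr_fun (hSmeas n) hker
        _ = (∫ p in S n, Gp p ∂ν)
            - ∫ p in S n, (2 * k 0) * (ψ p.1 * φ p.1 * (p.2 - p.1)⁻¹) ∂ν :=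
            integral_sub hGint (hhint2.const_mul _)
        _ = - ((2 * k 0) * ∫ p in S n, ψ p.1 * φ p.1 * (p.2 - p.1)⁻¹ ∂ν) := by
            rw [hGzero, integral_const_mul]; ring
        _ = -(2 * k 0) * ∫ x in Set.Icc a b, ψ x * φ x *
              (max (Real.log (b - x)) (Real.log (((n:ℝ)+1)⁻¹))
                - max (Real.log (x - a)) (Real.log (((n:ℝ)+1)⁻¹))) := by
            rw [hFub]; ring
    -- limit of the truncated log integrals
    have hdom : Integrable (fun x => Bψ*Bφ * (|Real.log (b - x)| + |Real.log (x - a)|))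
        (volume.restrict (Set.Icc a b)) :=
      ((aux_logInt_right a b).abs.add (aux_logInt_left a b).abs).const_mul (Bψ*Bφ)
    have hmeaslep : ∀ c : ℝ, Measurable (fun x => ψ x * φ x *
        (max (Real.log (b - x)) (Real.log c) - max (Real.log (x - a)) (Real.log c))) := by
      intro c
      refine (hψc.measurable.mul hφc.measurable).mul (Measurable.sub ?_ ?_)
      · exact (Real.measurable_log.comp (measurable_const.sub measurable_id)).max
          measurable_const
      · exact (Real.measurable_log.comp (measurable_id.sub measurable_const)).max
          measurable_const
    have hboundlep : ∀ c : ℝ, ∀ᵐ x ∂(volume.restrict (Set.Icc a b)),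
        ‖ψ x * φ x * (max (Real.log (b - x)) (Real.log c)
          - max (Real.log (x - a)) (Real.log c))‖
          ≤ Bψ*Bφ * (|Real.log (b - x)| + |Real.log (x - a)|) := by
      intro c
      filter_upwards [ae_restrict_mem measurableSet_Icc] with x hxI
      rw [Real.norm_eq_abs, abs_mul]
      have h1 : |ψ x * φ x| ≤ Bψ*Bφ := by
        rw [abs_mul]
        exact mul_le_mul (hbψ x hxI) (hbφ x hxI) (abs_nonneg _) hBψ0
      have h2 : |max (Real.log (b - x)) (Real.log c)
          - max (Real.log (x - a)) (Real.log c)|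
          ≤ |Real.log (b - x)| + |Real.log (x - a)| :=
        le_trans (abs_max_sub_max_le_abs _ _ _) (abs_sub _ _)
      exact mul_le_mul h1 h2 (abs_nonneg _) (mul_nonneg hBψ0 hBφ0)
    have T3 : Filter.Tendsto (fun n : ℕ => ∫ x in Set.Icc a b, ψ x * φ x *
          (max (Real.log (b - x)) (Real.log (((n:ℝ)+1)⁻¹))
            - max (Real.log (x - a)) (Real.log (((n:ℝ)+1)⁻¹)))) Filter.atTop
        (nhds (∫ x in Set.Icc a b, ψ x * φ x * L x)) := by
      refine tendsto_integral_filter_of_dominated_convergence _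
        (Filter.Eventually.of_forall fun n => (hmeaslep _).aestronglyMeasurable)
        (Filter.Eventually.of_forall fun n => hboundlep _) hdom ?_
      filter_upwards [haeIoo] with x hx
      have hu : 0 < x - a := by linarith [hx.1]
      have hv : 0 < b - x := by linarith [hx.2]
      have hm0 : 0 < min (x - a) (b - x) := lt_min hu hv
      refine tendsto_const_nhds.congr' ?_
      filter_upwards [helim.eventually (gt_mem_nhds hm0)] with n hn
      rw [max_eq_left (Real.log_le_log (he0 n)
          (le_trans hn.le (min_le_right _ _))),
        max_eq_left (Real.log_le_log (he0 n)
          (le_trans hn.le (min_le_left _ _))), hLdef]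
    have hcore : (∫ p, Wp p ∂ν)
        = -(2 * k 0) * ∫ x in Set.Icc a b, ψ x * φ x * L x := by
      refine tendsto_nhds_unique T1 ?_
      simp_rw [T2]
      exact T3.const_mul _
    -- assembling the identity
    have hUint' : Integrable Up ((volume.restrict (Set.Icc a b)).prod
        (volume.restrict (Set.Icc a b))) := by rwa [← hνdef]
    have hVint' : Integrable Vp ((volume.restrict (Set.Icc a b)).prod
        (volume.restrict (Set.Icc a b))) := by rwa [← hνdef]
    have hAx : ∀ x : ℝ, ((1/Real.pi) * ∫ x' in Set.Icc a b,
          Real.cos (Φ x' - Φ x) * k (x' - x) * (ψ x' - ψ x) / (x' - x)) * φ x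
        = (1/Real.pi) * ∫ y in Set.Icc a b, Up (x, y) := by
      intro x
      rw [mul_assoc]
      congr 1
      simp only [hUpdef]
      exact (integral_mul_const _ _).symm
    have hLHS : (∫ x in Set.Icc a b, ((1/Real.pi) * ∫ x' in Set.Icc a b,
          Real.cos (Φ x' - Φ x) * k (x' - x) * (ψ x' - ψ x) / (x' - x)) * φ x)
        = (1/Real.pi) * ∫ p, Up p ∂ν := by
      rw [integral_congr_ae (Filter.Eventually.of_forall hAx), integral_const_mul]
      congr 1
      rw [hνdef]
      exact (MeasureTheory.integral_prod Up hUint').symm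
    have hVps : ∀ x : ℝ, (∫ y in Set.Icc a b, Vp (x, y))
        = ψ x * ∫ x' in Set.Icc a b, H x x' := by
      intro x
      simp only [hVpdef]
      exact integral_const_mul _ _
    have hψBint : Integrable (fun x => ψ x * ∫ x' in Set.Icc a b, H x x')
        (volume.restrict (Set.Icc a b)) :=
      hVint'.integral_prod_left.congr (Filter.Eventually.of_forall hVps)
    have hψLint : Integrable (fun x => ψ x * φ x * L x)
        (volume.restrict (Set.Icc a b)) := by
      refine hdom.mono' ?_ ?_
      · refine ((hψc.measurable.mul hφc.measurable).mul ?_).aestronglyMeasurable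
        simp only [hLdef]
        exact (Real.measurable_log.comp (measurable_const.sub measurable_id)).sub
          (Real.measurable_log.comp (measurable_id.sub measurable_const))
      · filter_upwards [ae_restrict_mem measurableSet_Icc] with x hxI
        rw [Real.norm_eq_abs, abs_mul]
        have h1 : |ψ x * φ x| ≤ Bψ*Bφ := by
          rw [abs_mul]
          exact mul_le_mul (hbψ x hxI) (hbφ x hxI) (abs_nonneg _) hBψ0
        have h2 : |L x| ≤ |Real.log (b - x)| + |Real.log (x - a)| := by
          simp only [hLdef]
          exact abs_sub _ _
        exact mul_le_mul h1 h2 (abs_nonneg _) (mul_nonneg hBψ0 hBφ0)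
    have hRHS : (∫ x in Set.Icc a b, ψ x * pv x)
        = (1/Real.pi) * ((∫ p, Vp p ∂ν)
            + 2 * k 0 * ∫ x in Set.Icc a b, ψ x * φ x * L x) := by
      have h1 : ∀ x : ℝ, ψ x * pv x = (1/Real.pi) * (ψ x * (∫ x' in Set.Icc a b, H x x')
          + 2 * k 0 * (ψ x * φ x * L x)) := by
        intro x
        simp only [hpvdef]
        ring
      rw [integral_congr_ae (Filter.Eventually.of_forall h1), integral_const_mul]
      congr 1
      rw [integral_add hψBint (hψLint.const_mul _)]
      congr 1
      · rw [integral_congr_ae (Filter.Eventually.of_forall fun x => (hVps x).symm)]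
        rw [hνdef]
        exact (MeasureTheory.integral_prod Vp hVint').symm
      · exact integral_const_mul _ _
    have hUW : (∫ p, Up p ∂ν) = (∫ p, Wp p ∂ν) - ∫ p, Vp p ∂ν := by
      rw [integral_congr_ae (Filter.Eventually.of_forall hUVW)]
      exact integral_sub hWint hVint
    rw [hLHS, hRHS, hUW, hcore]
    ring
end

section
/- Let X and Y be real Hilbert spaces, let P : X → Y be a map, let Φ_k, Φ_* ∈ X, let s, s^δ ∈ Y, let δ ≥ 0 and η ≥ 0, and let A : X → Y be a bounded linear operator with operator norm ‖A‖ ≤ 1. Assume P(Φ_*) = s, ‖s^δ − s‖ ≤ δ, and the linearization estimate ‖P(Φ_k) − P(Φ_*) − A(Φ_k − Φ_*)‖ ≤ η‖P(Φ_k) − P(Φ_*)‖. Define Φ_{k+1} = Φ_k + A*(s^δ − P(Φ_k)), where A* is the Hilbert-space adjoint of A. Then ‖Φ_{k+1} − Φ_*‖² − ‖Φ_k − Φ_*‖² ≤ ‖s^δ − P(Φ_k)‖ · ( 2(1+η)δ − (1−2η)‖s^δ − P(Φ_k)‖ ). -/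
open ContinuousLinearMap

/-- Fundamental one-step error estimate for the non-linear Landweber iteration
`Φ_{k+1} = Φ_k + A*(s^δ − P(Φ_k))` under the scaling condition `‖A‖ ≤ 1` and the
tangential cone condition with constant `η`. -/
theorem stmt_9 {X Y : Type*} [NormedAddCommGroup X] [InnerProductSpace ℝ X] [CompleteSpace X]
    [NormedAddCommGroup Y] [InnerProductSpace ℝ Y] [CompleteSpace Y]
    (P : X → Y) (Φk Φstar : X) (s sδ : Y) (δ η : ℝ) (hδ : 0 ≤ δ) (hη : 0 ≤ η)
    (A : X →L[ℝ] Y) (hA : ‖A‖ ≤ 1)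
    (hsol : P Φstar = s) (hnoise : ‖sδ - s‖ ≤ δ)
    (hcone : ‖P Φk - P Φstar - A (Φk - Φstar)‖ ≤ η * ‖P Φk - P Φstar‖) :
    ‖(Φk + ContinuousLinearMap.adjoint A (sδ - P Φk)) - Φstar‖ ^ 2 - ‖Φk - Φstar‖ ^ 2 ≤
      ‖sδ - P Φk‖ * (2 * (1 + η) * δ - (1 - 2 * η) * ‖sδ - P Φk‖) := by
  set r : Y := sδ - P Φk with hr
  set e : X := Φk - Φstar with he
  have hEq : (Φk + ContinuousLinearMap.adjoint A r) - Φstar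
      = e + ContinuousLinearMap.adjoint A r := by rw [he]; abel
  rw [hEq]
  have hexp : ‖e + ContinuousLinearMap.adjoint A r‖ ^ 2
      = ‖e‖ ^ 2 + 2 * inner ℝ e (ContinuousLinearMap.adjoint A r)
        + ‖ContinuousLinearMap.adjoint A r‖ ^ 2 := norm_add_sq_real _ _
  have hinner : inner ℝ e (ContinuousLinearMap.adjoint A r) = (inner ℝ (A e) r : ℝ) :=
    ContinuousLinearMap.adjoint_inner_right A e r
  -- bound ‖A* r‖ ≤ ‖r‖
  have hAd : ‖ContinuousLinearMap.adjoint A r‖ ≤ ‖r‖ := by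
    calc ‖ContinuousLinearMap.adjoint A r‖ ≤ ‖ContinuousLinearMap.adjoint A‖ * ‖r‖ :=
          (ContinuousLinearMap.adjoint A).le_opNorm r
      _ ≤ 1 * ‖r‖ := by
          apply mul_le_mul_of_nonneg_right _ (norm_nonneg r)
          rw [LinearIsometryEquiv.norm_map ContinuousLinearMap.adjoint A]; exact hA
      _ = ‖r‖ := one_mul _
  have hr0 : (0:ℝ) ≤ ‖r‖ := norm_nonneg r
  -- bound ‖P Φk - s‖ ≤ ‖r‖ + δ
  have hPs : ‖P Φk - s‖ ≤ ‖r‖ + δ := by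
    have : P Φk - s = -r + (sδ - s) := by rw [hr]; abel
    rw [this]
    calc ‖-r + (sδ - s)‖ ≤ ‖-r‖ + ‖sδ - s‖ := norm_add_le _ _
      _ ≤ ‖r‖ + δ := by rw [norm_neg]; exact add_le_add le_rfl hnoise
  -- cone with s substituted
  have hcone' : ‖P Φk - s - A e‖ ≤ η * (‖r‖ + δ) := by
    rw [← hsol]
    calc ‖P Φk - P Φstar - A e‖ ≤ η * ‖P Φk - P Φstar‖ := hcone
      _ ≤ η * (‖r‖ + δ) := by
          apply mul_le_mul_of_nonneg_left _ hη
          rw [hsol]; exact hPs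
  -- inner product bounds
  have h1 : (inner ℝ (A e - (P Φk - s)) r : ℝ) ≤ η * (‖r‖ + δ) * ‖r‖ := by
    calc (inner ℝ (A e - (P Φk - s)) r : ℝ) ≤ ‖A e - (P Φk - s)‖ * ‖r‖ := real_inner_le_norm _ _
      _ ≤ η * (‖r‖ + δ) * ‖r‖ := by
          apply mul_le_mul_of_nonneg_right _ hr0
          rw [← norm_neg]
          simpa [neg_sub] using hcone'
  have h2 : (inner ℝ (P Φk - s) r : ℝ) ≤ -‖r‖ ^ 2 + δ * ‖r‖ := by
    have hsplit : P Φk - s = -r + (sδ - s) := by rw [hr]; abel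
    rw [hsplit, inner_add_left, inner_neg_left, real_inner_self_eq_norm_sq]
    have : (inner ℝ (sδ - s) r : ℝ) ≤ δ * ‖r‖ := by
      calc (inner ℝ (sδ - s) r : ℝ) ≤ ‖sδ - s‖ * ‖r‖ := real_inner_le_norm _ _
        _ ≤ δ * ‖r‖ := mul_le_mul_of_nonneg_right hnoise hr0
    linarith
  have hsum : (inner ℝ (A e) r : ℝ) ≤ η * (‖r‖ + δ) * ‖r‖ + (-‖r‖ ^ 2 + δ * ‖r‖) := by
    have : (inner ℝ (A e) r : ℝ) = inner ℝ (A e - (P Φk - s)) r + inner ℝ (P Φk - s) r := by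
      rw [← inner_add_left, sub_add_cancel]
    rw [this]; exact add_le_add h1 h2
  have hAd2 : ‖ContinuousLinearMap.adjoint A r‖ ^ 2 ≤ ‖r‖ ^ 2 := by
    exact pow_le_pow_left₀ (norm_nonneg _) hAd 2
  rw [hexp, hinner]
  nlinarith [hsum, hAd2]
end

section
/- Let X and Y be real Hilbert spaces, let P : X → Y be a map, let Φ_k, Φ_* ∈ X, let s, s^δ ∈ Y, let δ ≥ 0, 0 ≤ η < 1/2, and τ ≥ 2(1+η)/(1−2η), and let A : X → Y be a bounded linear operator with ‖A‖ ≤ 1. Assume P(Φ_*) = s, ‖s^δ − s‖ ≤ δ, the tangential cone estimate ‖P(Φ_k) − P(Φ_*) − A(Φ_k − Φ_*)‖ ≤ η‖P(Φ_k) − P(Φ_*)‖, and ‖s^δ − P(Φ_k)‖ > τδ. Define Φ_{k+1} = Φ_k + A*(s^δ − P(Φ_k)). Then ‖Φ_{k+1} − Φ_*‖ < ‖Φ_k − Φ_*‖. -/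
open ContinuousLinearMap

set_option maxHeartbeats 1000000

/-- Monotone error decrease of the non-linear Landweber step before the discrepancy
principle is triggered: if `‖s^δ − P(Φ_k)‖ > τδ` with `τ ≥ 2(1+η)/(1−2η)`, `η < 1/2`,
then the Landweber update strictly decreases the distance to the solution `Φ_*`. -/
theorem stmt_10 {X Y : Type*} [NormedAddCommGroup X] [InnerProductSpace ℝ X] [CompleteSpace X]
    [NormedAddCommGroup Y] [InnerProductSpace ℝ Y] [CompleteSpace Y]
    (P : X → Y) (Φk Φstar : X) (s sδ : Y) (δ η τ : ℝ)
    (hδ : 0 ≤ δ) (hη0 : 0 ≤ η) (hη : η < 1 / 2) (hτ : 2 * (1 + η) / (1 - 2 * η) ≤ τ)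
    (A : X →L[ℝ] Y) (hA : ‖A‖ ≤ 1)
    (hsol : P Φstar = s) (hnoise : ‖sδ - s‖ ≤ δ)
    (hcone : ‖P Φk - P Φstar - A (Φk - Φstar)‖ ≤ η * ‖P Φk - P Φstar‖)
    (hdisc : τ * δ < ‖sδ - P Φk‖) :
    ‖(Φk + ContinuousLinearMap.adjoint A (sδ - P Φk)) - Φstar‖ < ‖Φk - Φstar‖ := by
  set e := Φk - Φstar with he
  set r := sδ - P Φk with hr
  have h2η : (0:ℝ) < 1 - 2 * η := by linarith
  have hτpos : 0 < τ := lt_of_lt_of_le (by positivity) hτ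
  have hτη : 2 * (1 + η) ≤ τ * (1 - 2 * η) := by
    rw [div_le_iff₀ h2η] at hτ; linarith
  have hRpos : (0:ℝ) < ‖r‖ := lt_of_le_of_lt (by positivity) hdisc
  have hrw : (Φk + ContinuousLinearMap.adjoint A r) - Φstar
      = e + ContinuousLinearMap.adjoint A r := by rw [he]; abel
  rw [hrw]
  set w := P Φk - P Φstar - A e with hw
  have hAe : A e = -r + (sδ - s) - w := by
    rw [hw, hsol, hr]; abel
  have hinner : (inner ℝ e (ContinuousLinearMap.adjoint A r) : ℝ) = inner ℝ (A e) r :=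
    ContinuousLinearMap.adjoint_inner_right A e r
  have hAr : ‖ContinuousLinearMap.adjoint A r‖ ≤ ‖r‖ := by
    calc ‖ContinuousLinearMap.adjoint A r‖ ≤ ‖ContinuousLinearMap.adjoint A‖ * ‖r‖ :=
          (ContinuousLinearMap.adjoint A).le_opNorm r
      _ ≤ 1 * ‖r‖ := by
          have : ‖ContinuousLinearMap.adjoint A‖ = ‖A‖ :=
            LinearIsometryEquiv.norm_map ContinuousLinearMap.adjoint A
          rw [this]
          exact mul_le_mul_of_nonneg_right hA (norm_nonneg _)
      _ = ‖r‖ := one_mul _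
  -- bound ‖P Φk - s‖
  have hPs : ‖P Φk - s‖ ≤ ‖r‖ + δ := by
    have : P Φk - s = -r + (sδ - s) := by rw [hr]; abel
    rw [this]
    calc ‖-r + (sδ - s)‖ ≤ ‖-r‖ + ‖sδ - s‖ := norm_add_le _ _
      _ ≤ ‖r‖ + δ := by rw [norm_neg]; linarith
  have hwb : ‖w‖ ≤ η * (‖r‖ + δ) := by
    rw [hsol] at hcone
    calc ‖w‖ ≤ η * ‖P Φk - s‖ := hcone
      _ ≤ η * (‖r‖ + δ) := mul_le_mul_of_nonneg_left hPs hη0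
  -- expand the inner product
  have hinner2 : (inner ℝ (A e) r : ℝ) = -‖r‖^2 + inner ℝ (sδ - s) r - inner ℝ w r := by
    rw [hAe, inner_sub_left, inner_add_left, inner_neg_left, real_inner_self_eq_norm_sq]
  have hns : (inner ℝ (sδ - s) r : ℝ) ≤ δ * ‖r‖ := by
    calc (inner ℝ (sδ - s) r : ℝ) ≤ ‖sδ - s‖ * ‖r‖ := real_inner_le_norm _ _
      _ ≤ δ * ‖r‖ := mul_le_mul_of_nonneg_right hnoise (norm_nonneg _)
  have hwr : -(η * (‖r‖ + δ) * ‖r‖) ≤ (inner ℝ w r : ℝ) := by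
    have h1 : -(‖w‖ * ‖r‖) ≤ (inner ℝ w r : ℝ) := neg_le_of_abs_le (abs_real_inner_le_norm _ _)
    have h2 : ‖w‖ * ‖r‖ ≤ η * (‖r‖ + δ) * ‖r‖ :=
      mul_le_mul_of_nonneg_right hwb (norm_nonneg _)
    linarith
  have hsq : ‖e + ContinuousLinearMap.adjoint A r‖^2 < ‖e‖^2 := by
    have hexp : ‖e + ContinuousLinearMap.adjoint A r‖^2
        = ‖e‖^2 + 2 * inner ℝ e (ContinuousLinearMap.adjoint A r)
          + ‖ContinuousLinearMap.adjoint A r‖^2 :=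
      norm_add_sq_real e (ContinuousLinearMap.adjoint A r)
    have hArsq : ‖ContinuousLinearMap.adjoint A r‖^2 ≤ ‖r‖^2 := by
      have := norm_nonneg (ContinuousLinearMap.adjoint A r)
      nlinarith
    have k1 : (1 - 2*η) * (τ * δ) < (1 - 2*η) * ‖r‖ :=
      mul_lt_mul_of_pos_left hdisc h2η
    have k2 : 2 * (1 + η) * δ ≤ τ * (1 - 2*η) * δ :=
      mul_le_mul_of_nonneg_right hτη hδ
    have k3 : (1 - 2*η) * (τ * δ) = τ * (1 - 2*η) * δ := by ring
    have key : (2*η - 1) * ‖r‖ + 2 * (1 + η) * δ < 0 := by linarith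
    have key2 : ((2*η - 1) * ‖r‖ + 2 * (1 + η) * δ) * ‖r‖ < 0 * ‖r‖ :=
      mul_lt_mul_of_pos_right key hRpos
    rw [hexp, hinner, hinner2]
    nlinarith [hns, hwr, hArsq, hRpos.le, mul_nonneg hη0 hδ]
  have := norm_nonneg (e + ContinuousLinearMap.adjoint A r)
  nlinarith [norm_nonneg e]
end

section
/- Let X and Y be real Hilbert spaces, Φ₀ ∈ X, ρ > 0, 0 ≤ η < 1/2, and let P : X → Y be Fréchet differentiable at every point of the closed ball B = {Φ : ‖Φ − Φ₀‖ ≤ 2ρ}, with derivative P'(Φ) satisfying ‖P'(Φ)‖ ≤ 1 for all Φ ∈ B and the tangential cone condition ‖P(Φ) − P(Φ̃) − P'(Φ)(Φ − Φ̃)‖ ≤ η‖P(Φ) − P(Φ̃)‖ for all Φ, Φ̃ ∈ B. Let s ∈ Y and suppose there exists Φ_* with ‖Φ_* − Φ₀‖ ≤ ρ and P(Φ_*) = s. Define Φ_{k+1} = Φ_k + P'(Φ_k)*(s − P(Φ_k)) with Φ_0 = Φ₀. Then every iterate Φ_k satisfies ‖Φ_k − Φ_*‖ ≤ ‖Φ₀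 − Φ_*‖ (in particular Φ_k ∈ B for all k), and Σ_{k=0}^∞ ‖s − P(Φ_k)‖² ≤ ‖Φ₀ − Φ_*‖² / (1 − 2η); in particular ‖s − P(Φ_k)‖ → 0 as k → ∞. -/
open ContinuousLinearMap Filter

/-- Well-definedness and residual square-summability of the exact-data non-linear
Landweber iteration under the scaling condition `‖P'(Φ)‖ ≤ 1` and the tangential cone
condition with constant `η < 1/2` on the ball `B_{2ρ}(Φ₀)`, when a solution exists in
`B_ρ(Φ₀)`: all iterates satisfy `‖Φ_k − Φ_*‖ ≤ ‖Φ₀ − Φ_*‖` (hence stay in the ball),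
`Σ_k ‖s − P(Φ_k)‖² ≤ ‖Φ₀ − Φ_*‖²/(1−2η)`, and the residuals tend to `0`. -/
theorem stmt_11 {X Y : Type*} [NormedAddCommGroup X] [InnerProductSpace ℝ X] [CompleteSpace X]
    [NormedAddCommGroup Y] [InnerProductSpace ℝ Y] [CompleteSpace Y]
    (P : X → Y) (P' : X → X →L[ℝ] Y) (Φ₀ : X) (ρ η : ℝ)
    (hρ : 0 < ρ) (hη0 : 0 ≤ η) (hη : η < 1 / 2)
    (hdiff : ∀ Φ, ‖Φ - Φ₀‖ ≤ 2 * ρ → HasFDerivAt P (P' Φ) Φ)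
    (hscale : ∀ Φ, ‖Φ - Φ₀‖ ≤ 2 * ρ → ‖P' Φ‖ ≤ 1)
    (hcone : ∀ Φ Φ', ‖Φ - Φ₀‖ ≤ 2 * ρ → ‖Φ' - Φ₀‖ ≤ 2 * ρ →
      ‖P Φ - P Φ' - P' Φ (Φ - Φ')‖ ≤ η * ‖P Φ - P Φ'‖)
    (s : Y) (Φstar : X) (hstar : ‖Φstar - Φ₀‖ ≤ ρ) (hsol : P Φstar = s)
    (Φ : ℕ → X) (hΦ0 : Φ 0 = Φ₀)
    (hiter : ∀ k, Φ (k + 1) = Φ k + ContinuousLinearMap.adjoint (P' (Φ k)) (s - P (Φ k))) :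
    (∀ k, ‖Φ k - Φstar‖ ≤ ‖Φ₀ - Φstar‖) ∧
    (∀ k, ‖Φ k - Φ₀‖ ≤ 2 * ρ) ∧
    Summable (fun k => ‖s - P (Φ k)‖ ^ 2) ∧
    (∑' k, ‖s - P (Φ k)‖ ^ 2) ≤ ‖Φ₀ - Φstar‖ ^ 2 / (1 - 2 * η) ∧
    Filter.Tendsto (fun k => ‖s - P (Φ k)‖) Filter.atTop (nhds 0) := by
  have hη2 : 0 < 1 - 2 * η := by linarith
  -- ball membership from monotonicity
  have hball : ∀ k, ‖Φ k - Φstar‖ ≤ ‖Φ₀ - Φstar‖ → ‖Φ k - Φ₀‖ ≤ 2 * ρ := by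
    intro k h
    have h0 : ‖Φ₀ - Φstar‖ ≤ ρ := by rw [norm_sub_rev]; exact hstar
    calc ‖Φ k - Φ₀‖ ≤ ‖Φ k - Φstar‖ + ‖Φstar - Φ₀‖ := by
          simpa using norm_sub_le_norm_sub_add_norm_sub (Φ k) Φstar Φ₀
      _ ≤ ρ + ρ := add_le_add (le_trans h h0) hstar
      _ = 2 * ρ := by ring
  -- key one-step estimate
  have hstep : ∀ k, ‖Φ k - Φ₀‖ ≤ 2 * ρ →
      ‖Φ (k+1) - Φstar‖ ^ 2 + (1 - 2 * η) * ‖s - P (Φ k)‖ ^ 2 ≤ ‖Φ k - Φstar‖ ^ 2 := by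
    intro k hk
    set A := P' (Φ k) with hA
    set e := Φ k - Φstar with he
    set r := s - P (Φ k) with hr
    have hiterk : Φ (k+1) - Φstar = e + ContinuousLinearMap.adjoint A r := by
      rw [hiter k, he, hA, hr]; abel
    have hsq : ‖Φ (k+1) - Φstar‖ ^ 2
        = ‖e‖ ^ 2 + 2 * inner ℝ e (ContinuousLinearMap.adjoint A r)
          + ‖ContinuousLinearMap.adjoint A r‖ ^ 2 := by
      rw [hiterk]; exact norm_add_sq_real e _
    have hadj : (inner ℝ e (ContinuousLinearMap.adjoint A r) : ℝ) = inner ℝ (A e) r :=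
      ContinuousLinearMap.adjoint_inner_right A e r
    -- cone estimate
    have hstar2 : ‖Φstar - Φ₀‖ ≤ 2 * ρ := le_trans hstar (by linarith)
    have hcone' := hcone (Φ k) Φstar hk hstar2
    have hPr : P (Φ k) - P Φstar = -r := by rw [hsol, hr]; abel
    have hE : ‖A e + r‖ ≤ η * ‖r‖ := by
      have : A e + r = -(P (Φ k) - P Φstar - A (Φ k - Φstar)) := by
        rw [hPr, he]; abel
      rw [this, norm_neg]
      calc ‖P (Φ k) - P Φstar - A (Φ k - Φstar)‖ ≤ η * ‖P (Φ k) - P Φstar‖ := hcone'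
        _ = η * ‖r‖ := by rw [hPr, norm_neg]
    have hinner : (inner ℝ (A e) r : ℝ) ≤ -‖r‖ ^ 2 + η * ‖r‖ ^ 2 := by
      have h1 : (inner ℝ (A e) r : ℝ) = inner ℝ (A e + r) r - ‖r‖ ^ 2 := by
        rw [inner_add_left, real_inner_self_eq_norm_sq]; ring
      have h2 : (inner ℝ (A e + r) r : ℝ) ≤ η * ‖r‖ * ‖r‖ :=
        le_trans (real_inner_le_norm _ _) (mul_le_mul_of_nonneg_right hE (norm_nonneg _))
      rw [h1]; nlinarith [norm_nonneg r]
    have hAnorm : ‖ContinuousLinearMap.adjoint A r‖ ≤ ‖r‖ := by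
      calc ‖ContinuousLinearMap.adjoint A r‖ ≤ ‖ContinuousLinearMap.adjoint A‖ * ‖r‖ :=
            (ContinuousLinearMap.adjoint A).le_opNorm r
        _ ≤ 1 * ‖r‖ := by
            apply mul_le_mul_of_nonneg_right _ (norm_nonneg r)
            rw [LinearIsometryEquiv.norm_map]; exact hscale (Φ k) hk
        _ = ‖r‖ := one_mul _
    have hAnorm2 : ‖ContinuousLinearMap.adjoint A r‖ ^ 2 ≤ ‖r‖ ^ 2 := by
      exact pow_le_pow_left₀ (norm_nonneg _) hAnorm 2
    rw [hsq, hadj]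
    linarith [hinner, hAnorm2]
  -- monotonicity
  have hmono : ∀ k, ‖Φ k - Φstar‖ ≤ ‖Φ₀ - Φstar‖ := by
    intro k
    induction k with
    | zero => rw [hΦ0]
    | succ k ih =>
        have hk := hball k ih
        have h := hstep k hk
        have hr2 : 0 ≤ (1 - 2*η) * ‖s - P (Φ k)‖ ^ 2 :=
          mul_nonneg (le_of_lt hη2) (sq_nonneg _)
        have hsq : ‖Φ (k+1) - Φstar‖ ^ 2 ≤ ‖Φ k - Φstar‖ ^ 2 := by linarith
        have : ‖Φ (k+1) - Φstar‖ ≤ ‖Φ k - Φstar‖ := by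
          nlinarith [norm_nonneg (Φ (k+1) - Φstar), norm_nonneg (Φ k - Φstar)]
        exact le_trans this ih
  have hball' : ∀ k, ‖Φ k - Φ₀‖ ≤ 2 * ρ := fun k => hball k (hmono k)
  -- partial sums
  have hpart : ∀ n, (1 - 2*η) * ∑ k ∈ Finset.range n, ‖s - P (Φ k)‖ ^ 2
      ≤ ‖Φ₀ - Φstar‖ ^ 2 - ‖Φ n - Φstar‖ ^ 2 := by
    intro n
    induction n with
    | zero => simp [hΦ0]
    | succ n ih =>
        rw [Finset.sum_range_succ, mul_add]
        have h := hstep n (hball' n)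
        linarith
  have hpart' : ∀ n, ∑ k ∈ Finset.range n, ‖s - P (Φ k)‖ ^ 2
      ≤ ‖Φ₀ - Φstar‖ ^ 2 / (1 - 2*η) := by
    intro n
    rw [le_div_iff₀ hη2, mul_comm]
    have := hpart n
    nlinarith [sq_nonneg ‖Φ n - Φstar‖]
  have hsum : Summable (fun k => ‖s - P (Φ k)‖ ^ 2) :=
    summable_of_sum_range_le (fun k => sq_nonneg _) hpart'
  have htsum : (∑' k, ‖s - P (Φ k)‖ ^ 2) ≤ ‖Φ₀ - Φstar‖ ^ 2 / (1 - 2*η) :=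
    Summable.tsum_le_of_sum_range_le hsum hpart'
  have htend : Filter.Tendsto (fun k => ‖s - P (Φ k)‖) Filter.atTop (nhds 0) := by
    have h2 := hsum.tendsto_atTop_zero
    have h3 : Filter.Tendsto (fun k => Real.sqrt (‖s - P (Φ k)‖ ^ 2)) Filter.atTop (nhds 0) := by
      simpa using h2.sqrt
    refine h3.congr fun k => ?_
    exact Real.sqrt_sq (norm_nonneg _)
  exact ⟨hmono, hball', hsum, htsum, htend⟩
end

section
/- Let X and Y be real Hilbert spaces, Φ₀ ∈ X, ρ > 0, 0 ≤ η < 1/2, and let P : X → Y be Fréchet differentiable at every point of the closed ball B = {Φ : ‖Φ − Φ₀‖ ≤ 2ρ}, with ‖P'(Φ)‖ ≤ 1 on B and the tangential cone condition ‖P(Φ) − P(Φ̃) − P'(Φ)(Φ − Φ̃)‖ ≤ η‖P(Φ) − P(Φ̃)‖ for all Φ, Φ̃ ∈ B. Let s ∈ Y with a solution Φ_* ∈ B_ρ(Φ₀) of P(Φ) = s, let δ > 0, let s^δ ∈ Y with ‖s^δ − s‖ ≤ δ, and let τ > 2(1+η)/(1−2η). Define Φ_{k+1}^δ = Φ_k^δ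 + P'(Φ_k^δ)*(s^δ − P(Φ_k^δ)) with Φ_0^δ = Φ₀. Then there exists a finite index k with ‖s^δ − P(Φ_k^δ)‖ ≤ τδ; i.e., the discrepancy principle determines a finite stopping index k_*(δ, s^δ). -/
open ContinuousLinearMap Filter

set_option maxHeartbeats 1600000 in

/-- Finiteness of the discrepancy-principle stopping index for the non-linear Landweber
iteration with noisy data `‖s^δ − s‖ ≤ δ`, `δ > 0`, and `τ > 2(1+η)/(1−2η)`: there is a
finite index `k` with `‖s^δ − P(Φ_k^δ)‖ ≤ τδ`. -/
theorem stmt_13 {X Y : Type*} [NormedAddCommGroup X] [InnerProductSpace ℝ X] [CompleteSpace X]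
    [NormedAddCommGroup Y] [InnerProductSpace ℝ Y] [CompleteSpace Y]
    (P : X → Y) (P' : X → X →L[ℝ] Y) (Φ₀ : X) (ρ η : ℝ)
    (hρ : 0 < ρ) (hη0 : 0 ≤ η) (hη : η < 1 / 2)
    (hdiff : ∀ Φ, ‖Φ - Φ₀‖ ≤ 2 * ρ → HasFDerivAt P (P' Φ) Φ)
    (hscale : ∀ Φ, ‖Φ - Φ₀‖ ≤ 2 * ρ → ‖P' Φ‖ ≤ 1)
    (hcone : ∀ Φ Φ', ‖Φ - Φ₀‖ ≤ 2 * ρ → ‖Φ' - Φ₀‖ ≤ 2 * ρ →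
      ‖P Φ - P Φ' - P' Φ (Φ - Φ')‖ ≤ η * ‖P Φ - P Φ'‖)
    (s : Y) (Φstar : X) (hstar : ‖Φstar - Φ₀‖ ≤ ρ) (hsol : P Φstar = s)
    (δ : ℝ) (hδ : 0 < δ) (sδ : Y) (hnoise : ‖sδ - s‖ ≤ δ)
    (τ : ℝ) (hτ : 2 * (1 + η) / (1 - 2 * η) < τ)
    (Φ : ℕ → X) (hΦ0 : Φ 0 = Φ₀)
    (hiter : ∀ k, Φ (k + 1) = Φ k + ContinuousLinearMap.adjoint (P' (Φ k)) (sδ - P (Φ k))) :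
    ∃ k : ℕ, ‖sδ - P (Φ k)‖ ≤ τ * δ := by
  by_contra hcon
  push_neg at hcon
  have h2η : (0:ℝ) < 1 - 2 * η := by linarith
  have hτpos : 0 < τ := lt_trans (div_pos (by linarith) h2η) hτ
  have h1 : 2 * (1 + η) < (1 - 2 * η) * τ := by
    rw [div_lt_iff₀ h2η] at hτ; linarith [hτ]
  set c : ℝ := ((1 - 2 * η) * τ - 2 * (1 + η)) * τ * δ ^ 2 with hc
  have hcpos : 0 < c := by
    apply mul_pos (mul_pos (by linarith) hτpos) (by positivity)
  -- main invariant
  have key : ∀ k : ℕ, ‖Φ k - Φstar‖ ^ 2 ≤ ρ ^ 2 - k * c := by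
    intro k
    induction k with
    | zero =>
      simp only [Nat.cast_zero, zero_mul, sub_zero, hΦ0]
      rw [← norm_neg]
      have : -(Φ₀ - Φstar) = Φstar - Φ₀ := by abel
      rw [this]
      exact pow_le_pow_left₀ (norm_nonneg _) hstar 2
    | succ k IH =>
      have hknn : (0:ℝ) ≤ k * c := mul_nonneg (Nat.cast_nonneg k) hcpos.le
      have hek : ‖Φ k - Φstar‖ ≤ ρ := by
        nlinarith [norm_nonneg (Φ k - Φstar)]
      have hball : ‖Φ k - Φ₀‖ ≤ 2 * ρ := by
        have : Φ k - Φ₀ = (Φ k - Φstar) + (Φstar - Φ₀) := by abel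
        rw [this]
        calc ‖(Φ k - Φstar) + (Φstar - Φ₀)‖ ≤ ‖Φ k - Φstar‖ + ‖Φstar - Φ₀‖ := norm_add_le _ _
          _ ≤ 2 * ρ := by linarith
      have hstar2 : ‖Φstar - Φ₀‖ ≤ 2 * ρ := by linarith
      set r := sδ - P (Φ k) with hrdef
      set A := P' (Φ k) with hA
      set e := Φ k - Φstar with he
      have hR : 0 < ‖r‖ := lt_trans (mul_pos hτpos hδ) (hcon k)
      -- cone condition
      have hw : ‖P (Φ k) - P Φstar - A e‖ ≤ η * ‖P (Φ k) - P Φstar‖ :=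
        hcone _ _ hball hstar2
      set w := P (Φ k) - P Φstar - A e with hwdef
      -- residual bound : ‖P Φ k - s‖ ≤ ‖r‖ + δ
      have hres : ‖P (Φ k) - P Φstar‖ ≤ ‖r‖ + δ := by
        have : P (Φ k) - P Φstar = -r + (sδ - s) := by rw [hsol, hrdef]; abel
        rw [this]
        calc ‖-r + (sδ - s)‖ ≤ ‖-r‖ + ‖sδ - s‖ := norm_add_le _ _
          _ ≤ ‖r‖ + δ := by rw [norm_neg]; linarith
      -- norm of step
      have hd : ‖(ContinuousLinearMap.adjoint A) r‖ ≤ ‖r‖ := by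
        calc ‖(ContinuousLinearMap.adjoint A) r‖ ≤ ‖ContinuousLinearMap.adjoint A‖ * ‖r‖ :=
              (ContinuousLinearMap.adjoint A).le_opNorm r
          _ ≤ 1 * ‖r‖ := by
              apply mul_le_mul_of_nonneg_right _ (norm_nonneg r)
              rw [LinearIsometryEquiv.norm_map]
              exact hscale _ hball
          _ = ‖r‖ := one_mul _
      -- expansion
      have eiter : Φ (k + 1) - Φstar = e + (ContinuousLinearMap.adjoint A) r := by
        rw [hiter k]; rw [he, hA, hrdef]; abel
      have hsq : ‖Φ (k + 1) - Φstar‖ ^ 2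
          = ‖e‖ ^ 2 + 2 * (inner ℝ e ((ContinuousLinearMap.adjoint A) r) : ℝ)
            + ‖(ContinuousLinearMap.adjoint A) r‖ ^ 2 := by
        rw [eiter]; exact norm_add_sq_real _ _
      have hinner1 : (inner ℝ e ((ContinuousLinearMap.adjoint A) r) : ℝ)
          = (inner ℝ r (A e) : ℝ) := by
        rw [real_inner_comm]
        exact ContinuousLinearMap.adjoint_inner_left A e r
      have hAe : A e = -r + (sδ - s) - w := by
        rw [hwdef, hsol, hrdef]; abel
      have hinner2 : (inner ℝ r (A e) : ℝ)
          = -‖r‖ ^ 2 + (inner ℝ r (sδ - s) : ℝ) - (inner ℝ r w : ℝ) := by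
        rw [hAe, inner_sub_right, inner_add_right, inner_neg_right,
          real_inner_self_eq_norm_sq]
      have hb1 : (inner ℝ r (sδ - s) : ℝ) ≤ ‖r‖ * δ := by
        calc (inner ℝ r (sδ - s) : ℝ) ≤ ‖r‖ * ‖sδ - s‖ := real_inner_le_norm _ _
          _ ≤ ‖r‖ * δ := mul_le_mul_of_nonneg_left hnoise (norm_nonneg _)
      have hb2 : -(inner ℝ r w : ℝ) ≤ ‖r‖ * (η * (‖r‖ + δ)) := by
        have h5 : |(inner ℝ r w : ℝ)| ≤ ‖r‖ * ‖w‖ := abs_real_inner_le_norm _ _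
        have h6 : ‖w‖ ≤ η * (‖r‖ + δ) := by
          calc ‖w‖ ≤ η * ‖P (Φ k) - P Φstar‖ := hw
            _ ≤ η * (‖r‖ + δ) := mul_le_mul_of_nonneg_left hres hη0
        have := neg_abs_le (inner ℝ r w : ℝ)
        nlinarith [norm_nonneg w, norm_nonneg r]
      have hd2 : ‖(ContinuousLinearMap.adjoint A) r‖ ^ 2 ≤ ‖r‖ ^ 2 :=
        pow_le_pow_left₀ (norm_nonneg _) hd 2
      -- combined estimate
      have hstep : ‖Φ (k + 1) - Φstar‖ ^ 2
          ≤ ‖e‖ ^ 2 - (1 - 2 * η) * ‖r‖ ^ 2 + 2 * (1 + η) * δ * ‖r‖ := by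
        rw [hsq, hinner1, hinner2]; nlinarith [hb1, hb2, hd2]
      -- quadratic inequality giving the decrease
      have h2 : τ * δ < ‖r‖ := hcon k
      have h3 : (0:ℝ) < (1 - 2 * η) * (‖r‖ + τ * δ) - 2 * (1 + η) * δ := by
        nlinarith [mul_pos h2η hR, mul_lt_mul_of_pos_right h1 hδ]
      have h4 : (0:ℝ) ≤ (‖r‖ - τ * δ) * ((1 - 2 * η) * (‖r‖ + τ * δ) - 2 * (1 + η) * δ) :=
        le_of_lt (mul_pos (by linarith) h3)
      have hdec : c ≤ (1 - 2 * η) * ‖r‖ ^ 2 - 2 * (1 + η) * δ * ‖r‖ := by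
        rw [hc]; nlinarith [h4]
      have : ‖Φ (k + 1) - Φstar‖ ^ 2 ≤ ‖e‖ ^ 2 - c := by linarith
      push_cast
      linarith [IH, this]
  -- contradiction for large k
  obtain ⟨k, hk⟩ := exists_nat_gt (ρ ^ 2 / c)
  have hk' : ρ ^ 2 < k * c := by
    rw [div_lt_iff₀ hcpos] at hk; linarith
  have := key k
  nlinarith [norm_nonneg (Φ k - Φstar), sq_nonneg ‖Φ k - Φstar‖]
end

section
/- Let X and Y be real Hilbert spaces, Φ₀ ∈ X, ρ > 0, 0 ≤ η < 1/2, and let P : X → Y be Fréchet differentiable at every point of the closed ball B = {Φ : ‖Φ − Φ₀‖ ≤ 2ρ}, with ‖P'(Φ)‖ ≤ 1 on B and the tangential cone condition ‖P(Φ) − P(Φ̃) − P'(Φ)(Φ − Φ̃)‖ ≤ η‖P(Φ) − P(Φ̃)‖ for all Φ, Φ̃ ∈ B. Let s ∈ Y, and let Φ† ∈ X with ‖Φ† − Φ₀‖ ≤ ρ be a Φ₀-minimum-norm solution, i.e., P(Φ†) = s and ‖Φ† − Φ₀‖ ≤ ‖Φ − Φ₀‖ for every Φ ∈ B with P(Φ)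 = s. Assume in addition that ker P'(Φ†) ⊆ ker P'(Φ) for all Φ with ‖Φ − Φ†‖ ≤ ρ. Then the exact-data Landweber iterates Φ_{k+1} = Φ_k + P'(Φ_k)*(s − P(Φ_k)), Φ_0 = Φ₀, converge in norm to Φ† as k → ∞. -/
open ContinuousLinearMap Filter

set_option maxHeartbeats 1000000 in
open RealInnerProductSpace in
/-- Convergence of the exact-data non-linear Landweber iteration to the
`Φ₀`-minimum-norm solution `Φ†` under the additional null-space nesting condition
`ker P'(Φ†) ⊆ ker P'(Φ)` for all `Φ` with `‖Φ − Φ†‖ ≤ ρ`. -/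
theorem stmt_15 {X Y : Type*} [NormedAddCommGroup X] [InnerProductSpace ℝ X] [CompleteSpace X]
    [NormedAddCommGroup Y] [InnerProductSpace ℝ Y] [CompleteSpace Y]
    (P : X → Y) (P' : X → X →L[ℝ] Y) (Φ₀ : X) (ρ η : ℝ)
    (hρ : 0 < ρ) (hη0 : 0 ≤ η) (hη : η < 1 / 2)
    (hdiff : ∀ Φ, ‖Φ - Φ₀‖ ≤ 2 * ρ → HasFDerivAt P (P' Φ) Φ)
    (hscale : ∀ Φ, ‖Φ - Φ₀‖ ≤ 2 * ρ → ‖P' Φ‖ ≤ 1)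
    (hcone : ∀ Φ Φ', ‖Φ - Φ₀‖ ≤ 2 * ρ → ‖Φ' - Φ₀‖ ≤ 2 * ρ →
      ‖P Φ - P Φ' - P' Φ (Φ - Φ')‖ ≤ η * ‖P Φ - P Φ'‖)
    (s : Y) (Φdag : X) (hdag : ‖Φdag - Φ₀‖ ≤ ρ) (hsol : P Φdag = s)
    (hmin : ∀ Φ, ‖Φ - Φ₀‖ ≤ 2 * ρ → P Φ = s → ‖Φdag - Φ₀‖ ≤ ‖Φ - Φ₀‖)
    (hker : ∀ Φ, ‖Φ - Φdag‖ ≤ ρ → LinearMap.ker (P' Φdag : X →ₗ[ℝ] Y) ≤ LinearMap.ker (P' Φ : X →ₗ[ℝ] Y))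
    (Φ : ℕ → X) (hΦ0 : Φ 0 = Φ₀)
    (hiter : ∀ k, Φ (k + 1) = Φ k + ContinuousLinearMap.adjoint (P' (Φ k)) (s - P (Φ k))) :
    Filter.Tendsto Φ Filter.atTop (nhds Φdag) := by
  set u : ℕ → Y := fun k => s - P (Φ k) with hu
  have hdag2 : ‖Φdag - Φ₀‖ ≤ 2 * ρ := by linarith
  have hdd : ∀ x : X, ‖x - Φdag‖ ≤ ρ → ‖x - Φ₀‖ ≤ 2 * ρ := by
    intro x hx
    have h1 : x - Φ₀ = (x - Φdag) + (Φdag - Φ₀) := by abel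
    rw [h1]
    calc ‖(x - Φdag) + (Φdag - Φ₀)‖ ≤ ‖x - Φdag‖ + ‖Φdag - Φ₀‖ := norm_add_le _ _
      _ ≤ 2 * ρ := by linarith
  -- the fundamental one-step estimate
  have key : ∀ k, ‖Φ k - Φdag‖ ≤ ρ →
      ‖Φ (k + 1) - Φdag‖ ^ 2 + (1 - 2 * η) * ‖u k‖ ^ 2 ≤ ‖Φ k - Φdag‖ ^ 2 := by
    intro k hk
    have hk2 : ‖Φ k - Φ₀‖ ≤ 2 * ρ := hdd _ hk
    set x := Φ k with hx
    set A := P' x with hA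
    have hstep : Φ (k + 1) - Φdag = (x - Φdag) + adjoint A (u k) := by
      rw [hiter k]; abel
    have hexp : ‖Φ (k + 1) - Φdag‖ ^ 2
        = ‖x - Φdag‖ ^ 2 + 2 * ⟪x - Φdag, adjoint A (u k)⟫ + ‖adjoint A (u k)‖ ^ 2 := by
      rw [hstep, norm_add_sq_real]
    have hinner : ⟪x - Φdag, adjoint A (u k)⟫ = ⟪A (x - Φdag), u k⟫ :=
      adjoint_inner_right A _ _
    have hPx : P x - P Φdag = -(u k) := by rw [hsol, hu]; simp; rfl
    set r := P x - P Φdag - A (x - Φdag) with hr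
    have hrle : ‖r‖ ≤ η * ‖u k‖ := by
      have := hcone x Φdag hk2 hdag2
      rw [← hr, hPx, norm_neg] at this
      exact this
    have hAx : A (x - Φdag) = -(u k) - r := by rw [hr, ← hPx]; abel
    have hinner2 : ⟪A (x - Φdag), u k⟫ = -‖u k‖ ^ 2 - ⟪r, u k⟫ := by
      rw [hAx, sub_eq_add_neg, inner_add_left, inner_neg_left, inner_neg_left,
        real_inner_self_eq_norm_sq]
      ring
    have hru : ⟪r, u k⟫ ≥ -(η * ‖u k‖ ^ 2) := by
      have h1 := abs_real_inner_le_norm r (u k)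
      have h2 : ‖r‖ * ‖u k‖ ≤ η * ‖u k‖ ^ 2 := by
        have := mul_le_mul_of_nonneg_right hrle (norm_nonneg (u k))
        nlinarith [norm_nonneg (u k)]
      have h3 := neg_abs_le (⟪r, u k⟫)
      linarith [abs_le.mp h1]
    have hadj : ‖adjoint A (u k)‖ ≤ ‖u k‖ := by
      calc ‖adjoint A (u k)‖ ≤ ‖adjoint A‖ * ‖u k‖ := (adjoint A).le_opNorm _
        _ ≤ 1 * ‖u k‖ := by
            have : ‖adjoint A‖ = ‖A‖ := LinearIsometryEquiv.norm_map adjoint A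
            rw [this]
            exact mul_le_mul_of_nonneg_right (hscale x hk2) (norm_nonneg _)
        _ = ‖u k‖ := one_mul _
    have hadj2 : ‖adjoint A (u k)‖ ^ 2 ≤ ‖u k‖ ^ 2 := by
      nlinarith [norm_nonneg (adjoint A (u k))]
    rw [hexp, hinner, hinner2]
    nlinarith [norm_nonneg (u k)]
  -- all iterates stay in the ball of radius ρ around Φdag
  have hball : ∀ k, ‖Φ k - Φdag‖ ≤ ρ := by
    intro k
    induction k with
    | zero => rw [hΦ0, norm_sub_rev]; exact hdag
    | succ k ih =>
      have h1 := key k ih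
      have h2 : (0:ℝ) ≤ (1 - 2 * η) * ‖u k‖ ^ 2 := by
        apply mul_nonneg (by linarith) (by positivity)
      have h3 : ‖Φ (k + 1) - Φdag‖ ^ 2 ≤ ρ ^ 2 := by
        nlinarith [pow_le_pow_left₀ (norm_nonneg (Φ k - Φdag)) ih 2]
      exact le_of_pow_le_pow_left₀ two_ne_zero hρ.le h3
  have hball2 : ∀ k, ‖Φ k - Φ₀‖ ≤ 2 * ρ := fun k => hdd _ (hball k)
  set g : ℕ → ℝ := fun k => ‖Φ k - Φdag‖ ^ 2 with hg
  have hgdec : ∀ k, g (k + 1) ≤ g k := by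
    intro k
    have h1 := key k (hball k)
    have h2 : (0:ℝ) ≤ (1 - 2 * η) * ‖u k‖ ^ 2 :=
      mul_nonneg (by linarith) (by positivity)
    simp only [hg]; linarith
  have hganti : Antitone g := antitone_nat_of_succ_le hgdec
  -- summability of the residuals
  have hpsum : ∀ n, ∑ i ∈ Finset.range n, ‖u i‖ ^ 2 ≤ ρ ^ 2 / (1 - 2 * η) := by
    intro n
    have h2η : (0:ℝ) < 1 - 2 * η := by linarith
    have htel : ∑ i ∈ Finset.range n, (g i - g (i + 1)) = g 0 - g n :=
      Finset.sum_range_sub' g n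
    have hsum : (1 - 2 * η) * ∑ i ∈ Finset.range n, ‖u i‖ ^ 2 ≤ g 0 - g n := by
      rw [Finset.mul_sum, ← htel]
      apply Finset.sum_le_sum
      intro i _
      have := key i (hball i)
      simp only [hg]; linarith
    have hg0 : g 0 ≤ ρ ^ 2 := by
      simp only [hg]
      nlinarith [pow_le_pow_left₀ (norm_nonneg (Φ 0 - Φdag)) (hball 0) 2, hball 0,
        norm_nonneg (Φ 0 - Φdag)]
    have hgn : 0 ≤ g n := by positivity
    rw [le_div_iff₀ h2η, mul_comm]
    linarith
  have hSummable : Summable fun k => ‖u k‖ ^ 2 :=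
    summable_of_sum_range_le (fun n => by positivity) hpsum
  set S : ℕ → ℝ := fun n => ∑ i ∈ Finset.range n, ‖u i‖ ^ 2 with hS
  have hSCauchy : CauchySeq S := hSummable.hasSum.tendsto_sum_nat.cauchySeq
  have hgCauchy : CauchySeq g := by
    have hbdd : BddBelow (Set.range g) := ⟨0, by rintro _ ⟨k, rfl⟩; positivity⟩
    exact (tendsto_atTop_ciInf hganti hbdd).cauchySeq
  -- telescoping
  have htel : ∀ a b, a ≤ b →
      Φ b - Φ a = ∑ i ∈ Finset.Ico a b, adjoint (P' (Φ i)) (u i) := by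
    intro a b hab
    induction b, hab using Nat.le_induction with
    | base => simp
    | succ b hab ih =>
      rw [Finset.sum_Ico_succ_top hab, ← ih, hiter b]
      abel
  -- key derivative bound
  have hAd : ∀ i l, ‖P' (Φ i) (Φ l - Φdag)‖ ≤ (1 + η) * (2 * ‖u i‖ + ‖u l‖) := by
    intro i l
    have h2i := hball2 i
    have h2l := hball2 l
    have hPu : ∀ j, P (Φ j) - P Φdag = -(u j) := by intro j; rw [hsol, hu]; simp
    have c1 : ‖P' (Φ i) (Φ i - Φdag)‖ ≤ (1 + η) * ‖u i‖ := by
      have hc := hcone (Φ i) Φdag h2i hdag2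
      rw [hPu i, norm_neg] at hc
      have h1 : P' (Φ i) (Φ i - Φdag)
          = -(u i) - (-(u i) - P' (Φ i) (Φ i - Φdag)) := by abel
      calc ‖P' (Φ i) (Φ i - Φdag)‖
          = ‖-(u i) - (-(u i) - P' (Φ i) (Φ i - Φdag))‖ := by rw [← h1]
        _ ≤ ‖-(u i)‖ + ‖-(u i) - P' (Φ i) (Φ i - Φdag)‖ := norm_sub_le _ _
        _ ≤ ‖u i‖ + η * ‖u i‖ := by
            rw [norm_neg]; linarith
        _ = (1 + η) * ‖u i‖ := by ring
    have hPil : ‖P (Φ i) - P (Φ l)‖ ≤ ‖u i‖ + ‖u l‖ := by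
      have : P (Φ i) - P (Φ l) = -(u i) - -(u l) := by rw [hu]; simp
      rw [this]
      calc ‖-(u i) - -(u l)‖ ≤ ‖-(u i)‖ + ‖-(u l)‖ := norm_sub_le _ _
        _ = ‖u i‖ + ‖u l‖ := by rw [norm_neg, norm_neg]
    have c2 : ‖P' (Φ i) (Φ i - Φ l)‖ ≤ (1 + η) * (‖u i‖ + ‖u l‖) := by
      have hc := hcone (Φ i) (Φ l) h2i h2l
      have h1 : P' (Φ i) (Φ i - Φ l)
          = (P (Φ i) - P (Φ l)) - (P (Φ i) - P (Φ l) - P' (Φ i) (Φ i - Φ l)) := by abel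
      calc ‖P' (Φ i) (Φ i - Φ l)‖
          = ‖(P (Φ i) - P (Φ l)) - (P (Φ i) - P (Φ l) - P' (Φ i) (Φ i - Φ l))‖ := by
            rw [← h1]
        _ ≤ ‖P (Φ i) - P (Φ l)‖ + ‖P (Φ i) - P (Φ l) - P' (Φ i) (Φ i - Φ l)‖ :=
            norm_sub_le _ _
        _ ≤ ‖P (Φ i) - P (Φ l)‖ + η * ‖P (Φ i) - P (Φ l)‖ := by linarith
        _ = (1 + η) * ‖P (Φ i) - P (Φ l)‖ := by ring
        _ ≤ (1 + η) * (‖u i‖ + ‖u l‖) :=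
            mul_le_mul_of_nonneg_left hPil (by linarith)
    have hsplit : P' (Φ i) (Φ l - Φdag)
        = P' (Φ i) (Φ i - Φdag) - P' (Φ i) (Φ i - Φ l) := by
      rw [← map_sub]
      congr 1
      abel
    calc ‖P' (Φ i) (Φ l - Φdag)‖
        ≤ ‖P' (Φ i) (Φ i - Φdag)‖ + ‖P' (Φ i) (Φ i - Φ l)‖ := by
          rw [hsplit]; exact norm_sub_le _ _
      _ ≤ (1 + η) * ‖u i‖ + (1 + η) * (‖u i‖ + ‖u l‖) := by linarith
      _ = (1 + η) * (2 * ‖u i‖ + ‖u l‖) := by ring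
  -- inner-product bound along a segment with minimal residual at l
  have hseg : ∀ a b l, a ≤ b → (∀ i ∈ Finset.Ico a b, ‖u l‖ ≤ ‖u i‖) →
      |⟪Φ b - Φ a, Φ l - Φdag⟫| ≤ 3 * (1 + η) * ∑ i ∈ Finset.Ico a b, ‖u i‖ ^ 2 := by
    intro a b l hab hmin'
    rw [htel a b hab, sum_inner]
    calc |∑ i ∈ Finset.Ico a b, ⟪adjoint (P' (Φ i)) (u i), Φ l - Φdag⟫|
        ≤ ∑ i ∈ Finset.Ico a b, |⟪adjoint (P' (Φ i)) (u i), Φ l - Φdag⟫| :=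
          Finset.abs_sum_le_sum_abs _ _
      _ ≤ ∑ i ∈ Finset.Ico a b, 3 * (1 + η) * ‖u i‖ ^ 2 := by
          apply Finset.sum_le_sum
          intro i hi
          rw [adjoint_inner_left]
          calc |⟪u i, P' (Φ i) (Φ l - Φdag)⟫|
              ≤ ‖u i‖ * ‖P' (Φ i) (Φ l - Φdag)‖ := abs_real_inner_le_norm _ _
            _ ≤ ‖u i‖ * ((1 + η) * (2 * ‖u i‖ + ‖u l‖)) :=
                mul_le_mul_of_nonneg_left (hAd i l) (norm_nonneg _)
            _ ≤ 3 * (1 + η) * ‖u i‖ ^ 2 := by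
                have h1 := hmin' i hi
                nlinarith [mul_le_mul_of_nonneg_left h1 (norm_nonneg (u i)),
                  norm_nonneg (u i), norm_nonneg (u l)]
      _ = 3 * (1 + η) * ∑ i ∈ Finset.Ico a b, ‖u i‖ ^ 2 := by rw [Finset.mul_sum]
  -- squared-distance estimate between iterates
  have hquad : ∀ a l, (∀ i ∈ Finset.Ico (min a l) (max a l), ‖u l‖ ≤ ‖u i‖) →
      ‖Φ a - Φ l‖ ^ 2 ≤ |g a - g l|
        + 2 * (3 * (1 + η)) * ∑ i ∈ Finset.Ico (min a l) (max a l), ‖u i‖ ^ 2 := by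
    intro a l hmin'
    have hid : ‖Φ a - Φ l‖ ^ 2 = g a - g l + 2 * ⟪Φ l - Φ a, Φ l - Φdag⟫ := by
      have h1 : Φ a - Φ l = (Φ a - Φdag) - (Φ l - Φdag) := by abel
      rw [h1, norm_sub_sq_real]
      simp only [hg]
      have h2 : ⟪Φ l - Φ a, Φ l - Φdag⟫
          = ⟪Φ l - Φdag, Φ l - Φdag⟫ - ⟪Φ a - Φdag, Φ l - Φdag⟫ := by
        rw [← inner_sub_left]
        congr 1
        abel
      rw [h2, real_inner_self_eq_norm_sq]
      ring
    have habs : |⟪Φ l - Φ a, Φ l - Φdag⟫|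
        ≤ 3 * (1 + η) * ∑ i ∈ Finset.Ico (min a l) (max a l), ‖u i‖ ^ 2 := by
      rcases le_total a l with h | h
      · have := hseg a l l h (by simpa [min_eq_left h, max_eq_right h] using hmin')
        simpa [min_eq_left h, max_eq_right h] using this
      · have := hseg l a l h (by simpa [min_eq_right h, max_eq_left h] using hmin')
        have h2 : ⟪Φ l - Φ a, Φ l - Φdag⟫ = -⟪Φ a - Φ l, Φ l - Φdag⟫ := by
          rw [← inner_neg_left]; congr 1; abel
        rw [h2, abs_neg]
        simpa [min_eq_right h, max_eq_left h] using this
    have h3 := abs_le.mp (le_refl |⟪Φ l - Φ a, Φ l - Φdag⟫|)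
    have h4 := le_abs_self (g a - g l)
    have h5 := le_abs_self (⟪Φ l - Φ a, Φ l - Φdag⟫)
    nlinarith [habs]
  -- Cauchy sequence
  have hCauchy : CauchySeq Φ := by
    rw [Metric.cauchySeq_iff]
    intro ε hε
    have hη1 : (0:ℝ) < 1 + η := by linarith
    have hδ1 : (0:ℝ) < (ε / 2) ^ 2 / 2 := by positivity
    have hδ2 : (0:ℝ) < (ε / 2) ^ 2 / (2 * (2 * (3 * (1 + η)))) := by positivity
    obtain ⟨N1, hN1⟩ := Metric.cauchySeq_iff.mp hgCauchy _ hδ1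
    obtain ⟨N2, hN2⟩ := Metric.cauchySeq_iff.mp hSCauchy _ hδ2
    refine ⟨max N1 N2, fun m hm n hn => ?_⟩
    set k := min m n with hk
    set j := max m n with hj
    have hkj : k ≤ j := min_le_max
    have hkN : max N1 N2 ≤ k := le_min hm hn
    obtain ⟨l, hlmem, hlmin⟩ := Finset.exists_min_image (Finset.Icc k j)
      (fun i => ‖u i‖) ⟨k, Finset.mem_Icc.mpr ⟨le_refl k, hkj⟩⟩
    rw [Finset.mem_Icc] at hlmem
    -- generic estimate for a ∈ [k, j]
    have hest : ∀ a, k ≤ a → a ≤ j → ‖Φ a - Φ l‖ < ε / 2 := by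
      intro a hka haj
      have hminseg : ∀ i ∈ Finset.Ico (min a l) (max a l), ‖u l‖ ≤ ‖u i‖ := by
        intro i hi
        rw [Finset.mem_Ico] at hi
        apply hlmin
        rw [Finset.mem_Icc]
        constructor
        · exact le_trans (le_min hka hlmem.1) hi.1
        · exact le_trans hi.2.le (max_le haj hlmem.2)
      have h1 := hquad a l hminseg
      have hga : |g a - g l| < (ε / 2) ^ 2 / 2 := by
        have := hN1 a (le_trans (le_trans (le_max_left N1 N2) hkN) hka)
          l (le_trans (le_trans (le_max_left N1 N2) hkN) hlmem.1)
        rwa [Real.dist_eq] at this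
      have hsum : ∑ i ∈ Finset.Ico (min a l) (max a l), ‖u i‖ ^ 2
          < (ε / 2) ^ 2 / (2 * (2 * (3 * (1 + η)))) := by
        have hmm : min a l ≤ max a l := min_le_max
        have heq : ∑ i ∈ Finset.Ico (min a l) (max a l), ‖u i‖ ^ 2
            = S (max a l) - S (min a l) := by
          rw [hS]
          exact Finset.sum_Ico_eq_sub _ hmm
        have hminN : max N1 N2 ≤ min a l := le_min (le_trans hkN hka) (le_trans hkN hlmem.1)
        have := hN2 (max a l) (le_trans (le_max_right N1 N2) (le_trans hminN (min_le_max)))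
          (min a l) (le_trans (le_max_right N1 N2) hminN)
        rw [Real.dist_eq] at this
        rw [heq]
        calc S (max a l) - S (min a l) ≤ |S (max a l) - S (min a l)| := le_abs_self _
          _ < _ := this
      have h2 : 2 * (3 * (1 + η)) * ∑ i ∈ Finset.Ico (min a l) (max a l), ‖u i‖ ^ 2
          < 2 * (3 * (1 + η)) * ((ε / 2) ^ 2 / (2 * (2 * (3 * (1 + η))))) :=
        mul_lt_mul_of_pos_left hsum (by positivity)
      have h3 : 2 * (3 * (1 + η)) * ((ε / 2) ^ 2 / (2 * (2 * (3 * (1 + η)))))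
          = (ε / 2) ^ 2 / 2 := by field_simp
      have h4 : ‖Φ a - Φ l‖ ^ 2 < (ε / 2) ^ 2 := by
        rw [h3] at h2
        linarith
      exact lt_of_pow_lt_pow_left₀ 2 (by positivity) h4
    have hm' : ‖Φ m - Φ l‖ < ε / 2 :=
      hest m (min_le_left m n) (le_max_left m n)
    have hn' : ‖Φ n - Φ l‖ < ε / 2 :=
      hest n (min_le_right m n) (le_max_right m n)
    rw [dist_eq_norm]
    calc ‖Φ m - Φ n‖ = ‖(Φ m - Φ l) - (Φ n - Φ l)‖ := by congr 1; abel
      _ ≤ ‖Φ m - Φ l‖ + ‖Φ n - Φ l‖ := norm_sub_le _ _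
      _ < ε := by linarith
  obtain ⟨L, hL⟩ := cauchySeq_tendsto_of_complete hCauchy
  -- properties of the limit
  have hLdag : ‖L - Φdag‖ ≤ ρ := by
    have h1 : Tendsto (fun k => ‖Φ k - Φdag‖) atTop (nhds ‖L - Φdag‖) :=
      ((hL.sub tendsto_const_nhds).norm)
    exact le_of_tendsto h1 (Eventually.of_forall hball)
  have hL2 : ‖L - Φ₀‖ ≤ 2 * ρ := hdd _ hLdag
  have hu0 : Tendsto u atTop (nhds 0) := by
    have h1 : Tendsto (fun k => ‖u k‖ ^ 2) atTop (nhds 0) := hSummable.tendsto_atTop_zero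
    have h2 : Tendsto (fun k => ‖u k‖) atTop (nhds 0) := by
      have h3 := (Real.continuous_sqrt.tendsto 0).comp h1
      simp only [Function.comp_def, Real.sqrt_zero] at h3
      convert h3 using 2 with k
      rw [Real.sqrt_sq (norm_nonneg _)]
    exact tendsto_zero_iff_norm_tendsto_zero.mpr h2
  have hPLs : P L = s := by
    have h1 : Tendsto (fun k => P (Φ k)) atTop (nhds (P L)) :=
      ((hdiff L hL2).continuousAt.tendsto).comp hL
    have h2 : Tendsto (fun k => P (Φ k)) atTop (nhds s) := by
      have h3 : Tendsto (fun k => s - u k) atTop (nhds (s - 0)) :=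
        tendsto_const_nhds.sub hu0
      rw [sub_zero] at h3
      convert h3 using 2 with k
      rw [hu]
      simp
    exact tendsto_nhds_unique h1 h2
  -- orthogonality of increments to ker P'(Φdag)
  have horthk : ∀ v, v ∈ LinearMap.ker (P' Φdag : X →ₗ[ℝ] Y) → ∀ k, ⟪Φ k - Φ₀, v⟫ = 0 := by
    intro v hv k
    induction k with
    | zero => simp [hΦ0]
    | succ k ih =>
      have hvk : P' (Φ k) v = 0 := hker (Φ k) (hball k) hv
      have h1 : Φ (k + 1) - Φ₀ = (Φ k - Φ₀) + adjoint (P' (Φ k)) (u k) := by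
        rw [hiter k]; abel
      rw [h1, inner_add_left, ih, adjoint_inner_left, hvk, inner_zero_right, add_zero]
  have horthL : ∀ v, v ∈ LinearMap.ker (P' Φdag : X →ₗ[ℝ] Y) → ⟪L - Φ₀, v⟫ = 0 := by
    intro v hv
    have h1 : Tendsto (fun k => ⟪Φ k - Φ₀, v⟫) atTop (nhds ⟪L - Φ₀, v⟫) :=
      (hL.sub tendsto_const_nhds).inner tendsto_const_nhds
    have h2 : Tendsto (fun k => ⟪Φ k - Φ₀, v⟫) atTop (nhds 0) := by
      simp only [horthk v hv]
      exact tendsto_const_nhds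
    exact tendsto_nhds_unique h1 h2
  -- L - Φdag lies in ker P'(Φdag)
  have hw : P' Φdag (L - Φdag) = 0 := by
    have hc := hcone Φdag L hdag2 hL2
    rw [hsol, hPLs, sub_self] at hc
    simp only [norm_zero, mul_zero, zero_sub, norm_neg] at hc
    have h1 : P' Φdag (Φdag - L) = 0 := norm_le_zero_iff.mp hc
    have h2 : L - Φdag = -(Φdag - L) := by abel
    rw [h2, map_neg, h1, neg_zero]
  have hvmem : L - Φdag ∈ LinearMap.ker (P' Φdag : X →ₗ[ℝ] Y) := LinearMap.mem_ker.mpr hw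
  have h1 : ⟪L - Φ₀, L - Φdag⟫ = 0 := horthL _ hvmem
  -- final Pythagoras / minimality argument
  have hLnorm : ‖L - Φ₀‖ ^ 2 = ‖Φdag - Φ₀‖ ^ 2 - ‖L - Φdag‖ ^ 2 := by
    have h2 : L - Φ₀ = (Φdag - Φ₀) + (L - Φdag) := by abel
    have h3 : ⟪Φdag - Φ₀, L - Φdag⟫ = ⟪L - Φ₀, L - Φdag⟫ - ⟪L - Φdag, L - Φdag⟫ := by
      rw [← inner_sub_left]
      congr 1
      abel
    rw [h2, norm_add_sq_real, h3, h1, real_inner_self_eq_norm_sq]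
    have h4 : ‖(Φdag - Φ₀) + (L - Φdag)‖ = ‖L - Φ₀‖ := by rw [← h2]
    ring
  have hmin' := hmin L hL2 hPLs
  have hsq : ‖Φdag - Φ₀‖ ^ 2 ≤ ‖L - Φ₀‖ ^ 2 :=
    pow_le_pow_left₀ (norm_nonneg _) hmin' 2
  have h0 : ‖L - Φdag‖ = 0 := by nlinarith [norm_nonneg (L - Φdag)]
  have hLeq : L = Φdag := sub_eq_zero.mp (norm_eq_zero.mp h0)
  rwa [hLeq] at hL
end
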